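/- arXiv:1706.00215 — 7 statements merged into one kernel-verified Lean document; each statement's English description precedes it below -/
import Mathlib

section
/- For every positive integer n and every integer k with 1 ≤ k ≤ n/3, the sum of binomial coefficients C(n,0) + C(n,1) + ... + C(n,k-1) is strictly less than C(n,k). -/
lemma aux_double (n j : ℕ) (h : 3 * j + 2 ≤ n) :
    2 * n.choose j ≤ n.choose (j + 1) := by
  have h1 : n.choose (j+1) * (j+1) = n.choose j * (n - j) :=
    Nat.choose_succ_right_eq n j
  have h2 : 2 * (j+1) ≤ n - j := by omega
  have h3 : 2 * n.choose j * (j+1) ≤ n.choose (j+1) * (j+1) := by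
    calc 2 * n.choose j * (j+1) = n.choose j * (2*(j+1)) := by ring
    _ ≤ n.choose j * (n - j) := Nat.mul_le_mul_left _ h2
    _ = n.choose (j+1) * (j+1) := h1.symm
  exact Nat.le_of_mul_le_mul_right h3 (by omega)

theorem stmt_0 (n k : ℕ) (hk : 1 ≤ k) (hkn : 3 * k ≤ n) :
    ∑ j ∈ Finset.range k, n.choose j < n.choose k := by
  induction k with
  | zero => omega
  | succ k ih =>
    rcases Nat.eq_zero_or_pos k with rfl | hk0
    · rw [Finset.sum_range_one, Nat.choose_zero_right, Nat.choose_one_right]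
      omega
    · have ih' := ih hk0 (by omega)
      rw [Finset.sum_range_succ]
      have := aux_double n k (by omega)
      omega
end

section
/- Let F be a family of subsets of [n+1] obtained as the double of a family G ⊆ 2^[n], i.e., F = {S ⊆ [n+1] : S ∩ [n] ∈ G}. If G is partition-free, then F is partition-free, and |F| = 2|G|. -/
/-- A family of finite sets is partition-free if it contains no `F₀, F₁, F₂`
with `F₁ ∩ F₂ = ∅` and `F₀ = F₁ ∪ F₂`. -/
def PartitionFree (F : Finset (Finset ℕ)) : Prop :=
  ¬ ∃ F₀ ∈ F, ∃ F₁ ∈ F, ∃ F₂ ∈ F, F₁ ∩ F₂ = ∅ ∧ F₀ = F₁ ∪ F₂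

theorem stmt_4 (n : ℕ) (G : Finset (Finset ℕ))
    (hG : G ⊆ (Finset.range n).powerset)
    (F : Finset (Finset ℕ))
    (hF : F = (Finset.range (n + 1)).powerset.filter
      (fun S => S ∩ Finset.range n ∈ G))
    (hGpf : PartitionFree G) :
    PartitionFree F ∧ F.card = 2 * G.card := by
  constructor
  · rintro ⟨F₀, h₀, F₁, h₁, F₂, h₂, hdisj, heq⟩
    rw [hF, Finset.mem_filter] at h₀ h₁ h₂
    apply hGpf
    refine ⟨F₀ ∩ Finset.range n, h₀.2, F₁ ∩ Finset.range n, h₁.2,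
      F₂ ∩ Finset.range n, h₂.2, ?_, ?_⟩
    · rw [← Finset.subset_empty, ← hdisj]
      intro x hx
      simp only [Finset.mem_inter] at hx ⊢
      exact ⟨hx.1.1, hx.2.1⟩
    · rw [heq, Finset.union_inter_distrib_right]
  · have key : F = G ∪ G.image (insert n) := by
      ext S
      simp only [hF, Finset.mem_filter, Finset.mem_powerset, Finset.mem_union,
        Finset.mem_image]
      constructor
      · rintro ⟨hsub, hmem⟩
        by_cases hn : n ∈ S
        · right
          refine ⟨S ∩ Finset.range n, hmem, ?_⟩
          ext x
          simp only [Finset.mem_insert, Finset.mem_inter, Finset.mem_range]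
          constructor
          · rintro (rfl | ⟨hx, _⟩) <;> assumption
          · intro hx
            rcases Nat.lt_succ_iff_lt_or_eq.mp (Finset.mem_range.mp (hsub hx)) with h | h
            · exact Or.inr ⟨hx, h⟩
            · exact Or.inl h
        · left
          have : S ∩ Finset.range n = S := by
            apply Finset.inter_eq_left.mpr
            intro x hx
            have := Finset.mem_range.mp (hsub hx)
            exact Finset.mem_range.mpr (Nat.lt_of_le_of_ne (Nat.lt_succ_iff.mp this)
              (fun h => hn (h ▸ hx)))
          rwa [this] at hmem
      · rintro (hS | ⟨T, hT, rfl⟩)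
        · have hsub := Finset.mem_powerset.mp (hG hS)
          have hS' : S ∩ Finset.range n = S := Finset.inter_eq_left.mpr hsub
          exact ⟨hsub.trans (by simp [Finset.range_subset]; intro x hx; omega), by rwa [hS']⟩
        · have hsub := Finset.mem_powerset.mp (hG hT)
          have hn : n ∉ T := fun h => lt_irrefl n (Finset.mem_range.mp (hsub h))
          constructor
          · intro x hx
            rcases Finset.mem_insert.mp hx with h | hx
            · exact Finset.mem_range.mpr (h ▸ Nat.lt_succ_self n)
            · exact Finset.mem_range.mpr (Nat.lt_succ_of_lt (Finset.mem_range.mp (hsub hx)))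
          · have : insert n T ∩ Finset.range n = T := by
              ext x
              simp only [Finset.mem_inter, Finset.mem_insert, Finset.mem_range]
              constructor
              · rintro ⟨h | hx, hlt⟩
                · exact absurd (h ▸ hlt) (lt_irrefl n)
                · exact hx
              · intro hx
                exact ⟨Or.inr hx, Finset.mem_range.mp (hsub hx)⟩
            rwa [this]
    have hinj : Set.InjOn (insert n) (G : Set (Finset ℕ)) := by
      intro a ha b hb hab
      have hna : n ∉ a := fun h => lt_irrefl n (Finset.mem_range.mp
        (Finset.mem_powerset.mp (hG ha) h))
      have hnb : n ∉ b := fun h => lt_irrefl n (Finset.mem_range.mp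
        (Finset.mem_powerset.mp (hG hb) h))
      have : (insert n a).erase n = (insert n b).erase n := by rw [hab]
      rwa [Finset.erase_insert hna, Finset.erase_insert hnb] at this
    have hdisj : Disjoint G (G.image (insert n)) := by
      rw [Finset.disjoint_left]
      intro a ha hmem
      obtain ⟨T, hT, rfl⟩ := Finset.mem_image.mp hmem
      exact absurd (Finset.mem_insert_self n T)
        (fun h => lt_irrefl n (Finset.mem_range.mp (Finset.mem_powerset.mp (hG ha) h)))
    rw [key, Finset.card_union_of_disjoint hdisj, Finset.card_image_of_injOn hinj]
    ring
end

section
/- Let S₁, S₂, S₃ ⊆ [n] be pairwise disjoint sets, and let F₁, F₂, F₃ ⊆ 2^[n] be cross partition-free families. Then the number of pairs (i, T) with i ∈ {1,2,3}, T ∈ {S_i, S_{i+1} ∪ S_{i-1}} (indices mod 3), and T ∈ F_i, is at most 4. -/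
/-- `F₁, F₂, F₃` are cross partition-free if there is no `A ∈ F₁`, `B ∈ F₂`,
`C ∈ F₃` such that one of them is the disjoint union of the other two. -/
def CrossPartitionFree (F₁ F₂ F₃ : Finset (Finset ℕ)) : Prop :=
  ¬ ∃ A ∈ F₁, ∃ B ∈ F₂, ∃ C ∈ F₃,
    (B ∩ C = ∅ ∧ A = B ∪ C) ∨ (A ∩ C = ∅ ∧ B = A ∪ C) ∨ (A ∩ B = ∅ ∧ C = A ∪ B)

lemma pair_inter_card_le (a b : Finset ℕ) (F : Finset (Finset ℕ)) :
    (({a, b} : Finset (Finset ℕ)) ∩ F).card ≤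
      (if a ∈ F then 1 else 0) + (if b ∈ F then 1 else 0) := by
  rw [Finset.insert_eq, Finset.union_inter_distrib_right]
  refine le_trans (Finset.card_union_le _ _) (add_le_add ?_ ?_) <;>
    split_ifs with h <;>
    simp [Finset.singleton_inter_of_mem, Finset.singleton_inter_of_notMem, h]

theorem stmt_8 (n : ℕ) (S₁ S₂ S₃ : Finset ℕ)
    (hS₁ : S₁ ⊆ Finset.range n) (hS₂ : S₂ ⊆ Finset.range n)
    (hS₃ : S₃ ⊆ Finset.range n)
    (h12 : Disjoint S₁ S₂) (h13 : Disjoint S₁ S₃) (h23 : Disjoint S₂ S₃)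
    (F₁ F₂ F₃ : Finset (Finset ℕ))
    (hF₁ : F₁ ⊆ (Finset.range n).powerset)
    (hF₂ : F₂ ⊆ (Finset.range n).powerset)
    (hF₃ : F₃ ⊆ (Finset.range n).powerset)
    (hcpf : CrossPartitionFree F₁ F₂ F₃) :
    (({S₁, S₂ ∪ S₃} : Finset (Finset ℕ)) ∩ F₁).card +
      (({S₂, S₃ ∪ S₁} : Finset (Finset ℕ)) ∩ F₂).card +
      (({S₃, S₁ ∪ S₂} : Finset (Finset ℕ)) ∩ F₃).card ≤ 4 := by
  have h1 : ¬(S₂ ∪ S₃ ∈ F₁ ∧ S₂ ∈ F₂ ∧ S₃ ∈ F₃) := by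
    rintro ⟨hA, hB, hC⟩
    exact hcpf ⟨_, hA, _, hB, _, hC,
      Or.inl ⟨Finset.disjoint_iff_inter_eq_empty.mp h23, rfl⟩⟩
  have h2 : ¬(S₁ ∈ F₁ ∧ S₃ ∪ S₁ ∈ F₂ ∧ S₃ ∈ F₃) := by
    rintro ⟨hA, hB, hC⟩
    exact hcpf ⟨_, hA, _, hB, _, hC,
      Or.inr (Or.inl ⟨Finset.disjoint_iff_inter_eq_empty.mp h13, Finset.union_comm _ _⟩)⟩
  have h3 : ¬(S₁ ∈ F₁ ∧ S₂ ∈ F₂ ∧ S₁ ∪ S₂ ∈ F₃) := by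
    rintro ⟨hA, hB, hC⟩
    exact hcpf ⟨_, hA, _, hB, _, hC,
      Or.inr (Or.inr ⟨Finset.disjoint_iff_inter_eq_empty.mp h12, rfl⟩)⟩
  have ha := pair_inter_card_le S₁ (S₂ ∪ S₃) F₁
  have hb := pair_inter_card_le S₂ (S₃ ∪ S₁) F₂
  have hc := pair_inter_card_le S₃ (S₁ ∪ S₂) F₃
  have k1 : (if S₂ ∪ S₃ ∈ F₁ then 1 else 0) + (if S₂ ∈ F₂ then 1 else 0) +
      (if S₃ ∈ F₃ then 1 else 0) ≤ 2 := by
    by_cases q1 : S₂ ∪ S₃ ∈ F₁ <;> by_cases q2 : S₂ ∈ F₂ <;> by_cases q3 : S₃ ∈ F₃ <;>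
      simp only [q1, q2, q3, if_true, if_false] <;>
      first | omega | exact absurd ⟨q1, q2, q3⟩ h1
  have k2 : (if S₁ ∈ F₁ then 1 else 0) + (if S₃ ∪ S₁ ∈ F₂ then 1 else 0) +
      (if S₃ ∈ F₃ then 1 else 0) ≤ 2 := by
    by_cases q1 : S₁ ∈ F₁ <;> by_cases q2 : S₃ ∪ S₁ ∈ F₂ <;> by_cases q3 : S₃ ∈ F₃ <;>
      simp only [q1, q2, q3, if_true, if_false] <;>
      first | omega | exact absurd ⟨q1, q2, q3⟩ h2
  have k3 : (if S₁ ∈ F₁ then 1 else 0) + (if S₂ ∈ F₂ then 1 else 0) +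
      (if S₁ ∪ S₂ ∈ F₃ then 1 else 0) ≤ 2 := by
    by_cases q1 : S₁ ∈ F₁ <;> by_cases q2 : S₂ ∈ F₂ <;> by_cases q3 : S₁ ∪ S₂ ∈ F₃ <;>
      simp only [q1, q2, q3, if_true, if_false] <;>
      first | omega | exact absurd ⟨q1, q2, q3⟩ h3
  have e1 : (if S₁ ∈ F₁ then 1 else 0) ≤ 1 := by split_ifs <;> omega
  have e2 : (if S₂ ∪ S₃ ∈ F₁ then 1 else 0) ≤ 1 := by split_ifs <;> omega
  have e3 : (if S₂ ∈ F₂ then 1 else 0) ≤ 1 := by split_ifs <;> omega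
  have e4 : (if S₃ ∪ S₁ ∈ F₂ then 1 else 0) ≤ 1 := by split_ifs <;> omega
  have e5 : (if S₃ ∈ F₃ then 1 else 0) ≤ 1 := by split_ifs <;> omega
  have e6 : (if S₁ ∪ S₂ ∈ F₃ then 1 else 0) ≤ 1 := by split_ifs <;> omega
  omega
end

section
/- Let F₁, F₂, F₃ ⊆ 2^[n] be cross partition-free families and let s₁, s₂, s₃ be nonnegative integers with s₁ + s₂ + s₃ ≤ n. For each family F_i and each integer t let y_i^t = C(n,t) − |{F ∈ F_i : |F| = t}| be the number of t-sets missing from F_i. Then ∑_{i=1}^{3} [ y_i^{s_i}/C(n,s_i) + y_i^{s_{i+1}+s_{i-1}}/C(n, s_{i+1}+s_{i-1}) ] ≥ 2, where indices are taken cyclically in {1,2,3}. -/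
/-- `y F t` is the number of `t`-element subsets of `[n]` missing from `F`. -/
noncomputable def missing (n : ℕ) (F : Finset (Finset ℕ)) (t : ℕ) : ℝ :=
  (n.choose t : ℝ) - (F.filter (fun S => S.card = t)).card

namespace Stmt9Aux

open Finset

lemma swap_sum (M : Finset ℕ) (a b : ℕ) (g : Finset ℕ → Finset ℕ → ℕ) :
    ∑ A ∈ M.powersetCard a, ∑ B ∈ (M \ A).powersetCard b, g A B
      = ∑ B ∈ M.powersetCard b, ∑ A ∈ (M \ B).powersetCard a, g A B := by
  rw [Finset.sum_sigma', Finset.sum_sigma']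
  refine Finset.sum_nbij' (fun p => ⟨p.2, p.1⟩) (fun p => ⟨p.2, p.1⟩) ?_ ?_ ?_ ?_ ?_ <;>
    simp only [Finset.mem_sigma, Finset.mem_powersetCard, Finset.subset_sdiff] <;>
    intros <;> simp_all [disjoint_comm]

lemma pair_union (M : Finset ℕ) (b c : ℕ) (g : Finset ℕ → ℕ) :
    ∑ B ∈ M.powersetCard b, ∑ C ∈ (M \ B).powersetCard c, g (B ∪ C)
      = ∑ D ∈ M.powersetCard (b + c), (b + c).choose b * g D := by
  have h : ∀ D ∈ M.powersetCard (b + c), (b + c).choose b * g D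
      = ∑ B ∈ D.powersetCard b, g D := by
    intro D hD
    rw [Finset.sum_const, smul_eq_mul]
    rw [Finset.mem_powersetCard] at hD
    rw [Finset.card_powersetCard, hD.2]
  rw [Finset.sum_congr rfl h, Finset.sum_sigma', Finset.sum_sigma']
  refine Finset.sum_nbij' (fun p => ⟨p.1 ∪ p.2, p.1⟩) (fun p => ⟨p.2, p.1 \ p.2⟩) ?_ ?_ ?_ ?_ ?_
  · rintro ⟨B, C⟩ hp
    simp only [Finset.mem_sigma, Finset.mem_powersetCard, Finset.subset_sdiff] at hp ⊢
    obtain ⟨⟨hBM, hBb⟩, ⟨hCM, hCB⟩, hCc⟩ := hp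
    refine ⟨⟨Finset.union_subset hBM hCM, ?_⟩, Finset.subset_union_left, hBb⟩
    rw [Finset.card_union_of_disjoint hCB.symm, hBb, hCc]
  · rintro ⟨D, B⟩ hp
    simp only [Finset.mem_sigma, Finset.mem_powersetCard, Finset.subset_sdiff] at hp ⊢
    obtain ⟨⟨hDM, hDc⟩, hBD, hBb⟩ := hp
    refine ⟨⟨hBD.trans hDM, hBb⟩, ⟨(Finset.sdiff_subset).trans hDM, Finset.sdiff_disjoint⟩, ?_⟩
    rw [Finset.card_sdiff_of_subset hBD, hDc, hBb, Nat.add_sub_cancel_left]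
  · rintro ⟨B, C⟩ hp
    simp only [Finset.mem_sigma, Finset.mem_powersetCard, Finset.subset_sdiff] at hp
    obtain ⟨⟨hBM, hBb⟩, ⟨hCM, hCB⟩, hCc⟩ := hp
    simp only [Sigma.mk.inj_iff, heq_eq_eq]
    exact ⟨trivial, Finset.union_sdiff_cancel_left hCB.symm⟩
  · rintro ⟨D, B⟩ hp
    simp only [Finset.mem_sigma, Finset.mem_powersetCard] at hp
    simp only [Sigma.mk.inj_iff, heq_eq_eq]
    exact ⟨Finset.union_sdiff_of_subset hp.2.1, trivial⟩
  · rintro ⟨B, C⟩ hp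
    rfl

lemma sum_ind_eq (M : Finset ℕ) (F : Finset (Finset ℕ)) (hF : F ⊆ M.powerset) (k : ℕ) :
    ∑ B ∈ M.powersetCard k, (if B ∈ F then 1 else 0 : ℕ)
      = (F.filter (fun S => S.card = k)).card := by
  classical
  have hfe : (M.powersetCard k).filter (· ∈ F) = F.filter (fun S => S.card = k) := by
    ext S
    simp only [mem_filter, mem_powersetCard]
    constructor
    · rintro ⟨⟨_, hSk⟩, hSF⟩; exact ⟨hSF, hSk⟩
    · rintro ⟨hSF, hSk⟩; exact ⟨⟨mem_powerset.mp (hF hSF), hSk⟩, hSF⟩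
  rw [Finset.sum_boole, hfe, Nat.cast_id]

lemma card_sdiff_mem {M A : Finset ℕ} {a : ℕ} (h : A ∈ M.powersetCard a) :
    (M \ A).card = M.card - a := by
  rw [Finset.mem_powersetCard] at h
  rw [Finset.card_sdiff_of_subset h.1, h.2]

lemma sdiff_sdiff_union (M A B : Finset ℕ) : (M \ A) \ B = M \ (A ∪ B) := by
  ext x
  simp only [Finset.mem_sdiff, Finset.mem_union, not_or]
  tauto

lemma two_const (M' : Finset ℕ) (b c k : ℕ) :
    ∑ B ∈ M'.powersetCard b, ∑ _C ∈ (M' \ B).powersetCard c, k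
      = M'.card.choose b * ((M'.card - b).choose c * k) := by
  have h1 : ∀ B ∈ M'.powersetCard b, ∑ _C ∈ (M' \ B).powersetCard c, k
      = (M'.card - b).choose c * k := by
    intro B hB
    rw [Finset.sum_const, smul_eq_mul, Finset.card_powersetCard, card_sdiff_mem hB]
  rw [Finset.sum_congr rfl h1, Finset.sum_const, smul_eq_mul, Finset.card_powersetCard]

variable (M : Finset ℕ) (F : Finset (Finset ℕ))

lemma termA (hF : F ⊆ M.powerset) (a b c : ℕ) :
    ∑ A ∈ M.powersetCard a, ∑ B ∈ (M \ A).powersetCard b,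
      ∑ C ∈ ((M \ A) \ B).powersetCard c, (if A ∈ F then 1 else 0 : ℕ)
    = (F.filter (fun S => S.card = a)).card
        * ((M.card - a).choose b * ((M.card - a - b).choose c)) := by
  have h1 : ∀ A ∈ M.powersetCard a,
      (∑ B ∈ (M \ A).powersetCard b, ∑ _C ∈ ((M \ A) \ B).powersetCard c,
        (if A ∈ F then 1 else 0 : ℕ))
      = (if A ∈ F then 1 else 0 : ℕ)
          * ((M.card - a).choose b * ((M.card - a - b).choose c)) := by
    intro A hA
    rw [two_const, card_sdiff_mem hA]
    ring
  rw [Finset.sum_congr rfl h1, ← Finset.sum_mul, sum_ind_eq M F hF]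

lemma termB (hF : F ⊆ M.powerset) (a b c : ℕ) :
    ∑ A ∈ M.powersetCard a, ∑ B ∈ (M \ A).powersetCard b,
      ∑ C ∈ ((M \ A) \ B).powersetCard c, (if B ∈ F then 1 else 0 : ℕ)
    = (F.filter (fun S => S.card = b)).card
        * ((M.card - b).choose a * ((M.card - a - b).choose c)) := by
  have h1 : ∀ A ∈ M.powersetCard a,
      (∑ B ∈ (M \ A).powersetCard b, ∑ _C ∈ ((M \ A) \ B).powersetCard c,
        (if B ∈ F then 1 else 0 : ℕ))
      = ∑ B ∈ (M \ A).powersetCard b,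
          (if B ∈ F then 1 else 0 : ℕ) * (M.card - a - b).choose c := by
    intro A hA
    refine Finset.sum_congr rfl fun B hB => ?_
    rw [Finset.sum_const, smul_eq_mul, Finset.card_powersetCard, card_sdiff_mem hB,
      card_sdiff_mem hA]
    ring
  rw [Finset.sum_congr rfl h1,
    swap_sum M a b (fun _A B => (if B ∈ F then 1 else 0 : ℕ) * (M.card - a - b).choose c)]
  have h2 : ∀ B ∈ M.powersetCard b,
      (∑ _A ∈ (M \ B).powersetCard a,
        (if B ∈ F then 1 else 0 : ℕ) * (M.card - a - b).choose c)
      = (if B ∈ F then 1 else 0 : ℕ)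
          * ((M.card - b).choose a * ((M.card - a - b).choose c)) := by
    intro B hB
    rw [Finset.sum_const, smul_eq_mul, Finset.card_powersetCard, card_sdiff_mem hB]
    ring
  rw [Finset.sum_congr rfl h2, ← Finset.sum_mul, sum_ind_eq M F hF]

lemma termC (hF : F ⊆ M.powerset) (a b c : ℕ) :
    ∑ A ∈ M.powersetCard a, ∑ B ∈ (M \ A).powersetCard b,
      ∑ C ∈ ((M \ A) \ B).powersetCard c, (if C ∈ F then 1 else 0 : ℕ)
    = (F.filter (fun S => S.card = c)).card
        * ((a + b).choose a * ((M.card - c).choose (a + b))) := by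
  calc
    ∑ A ∈ M.powersetCard a, ∑ B ∈ (M \ A).powersetCard b,
        ∑ C ∈ ((M \ A) \ B).powersetCard c, (if C ∈ F then 1 else 0 : ℕ)
      = ∑ A ∈ M.powersetCard a, ∑ B ∈ (M \ A).powersetCard b,
          (fun D => ∑ C ∈ (M \ D).powersetCard c, (if C ∈ F then 1 else 0 : ℕ)) (A ∪ B) := by
        refine Finset.sum_congr rfl fun A _ => Finset.sum_congr rfl fun B _ => ?_
        rw [sdiff_sdiff_union]
    _ = ∑ D ∈ M.powersetCard (a + b),
          (a + b).choose a *
            ∑ C ∈ (M \ D).powersetCard c, (if C ∈ F then 1 else 0 : ℕ) :=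
        pair_union M a b (fun D => ∑ C ∈ (M \ D).powersetCard c, (if C ∈ F then 1 else 0 : ℕ))
    _ = (a + b).choose a * ∑ D ∈ M.powersetCard (a + b),
          ∑ C ∈ (M \ D).powersetCard c, (if C ∈ F then 1 else 0 : ℕ) := by
        rw [Finset.mul_sum]
    _ = (a + b).choose a * ∑ C ∈ M.powersetCard c,
          ∑ _D ∈ (M \ C).powersetCard (a + b), (if C ∈ F then 1 else 0 : ℕ) := by
        rw [swap_sum M (a + b) c (fun _ C => (if C ∈ F then 1 else 0 : ℕ))]
    _ = (a + b).choose a * ∑ C ∈ M.powersetCard c,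
          (if C ∈ F then 1 else 0 : ℕ) * (M.card - c).choose (a + b) := by
        refine congrArg _ (Finset.sum_congr rfl fun C hC => ?_)
        rw [Finset.sum_const, smul_eq_mul, Finset.card_powersetCard, card_sdiff_mem hC]
        ring
    _ = (F.filter (fun S => S.card = c)).card
          * ((a + b).choose a * ((M.card - c).choose (a + b))) := by
        rw [← Finset.sum_mul, sum_ind_eq M F hF]
        ring

lemma termBC (hF : F ⊆ M.powerset) (a b c : ℕ) :
    ∑ A ∈ M.powersetCard a, ∑ B ∈ (M \ A).powersetCard b,
      ∑ C ∈ ((M \ A) \ B).powersetCard c, (if B ∪ C ∈ F then 1 else 0 : ℕ)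
    = (F.filter (fun S => S.card = b + c)).card
        * ((b + c).choose b * ((M.card - (b + c)).choose a)) := by
  calc
    ∑ A ∈ M.powersetCard a, ∑ B ∈ (M \ A).powersetCard b,
        ∑ C ∈ ((M \ A) \ B).powersetCard c, (if B ∪ C ∈ F then 1 else 0 : ℕ)
      = ∑ A ∈ M.powersetCard a, ∑ D ∈ (M \ A).powersetCard (b + c),
          (b + c).choose b * (if D ∈ F then 1 else 0 : ℕ) :=
        Finset.sum_congr rfl fun A _ =>
          pair_union (M \ A) b c (fun D => (if D ∈ F then 1 else 0 : ℕ))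
    _ = ∑ D ∈ M.powersetCard (b + c), ∑ _A ∈ (M \ D).powersetCard a,
          (b + c).choose b * (if D ∈ F then 1 else 0 : ℕ) :=
        swap_sum M a (b + c) (fun _A D => (b + c).choose b * (if D ∈ F then 1 else 0 : ℕ))
    _ = ∑ D ∈ M.powersetCard (b + c),
          (if D ∈ F then 1 else 0 : ℕ)
            * ((b + c).choose b * ((M.card - (b + c)).choose a)) := by
        refine Finset.sum_congr rfl fun D hD => ?_
        rw [Finset.sum_const, smul_eq_mul, Finset.card_powersetCard, card_sdiff_mem hD]
        ring
    _ = _ := by rw [← Finset.sum_mul, sum_ind_eq M F hF]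

lemma termCA (hF : F ⊆ M.powerset) (a b c : ℕ) :
    ∑ A ∈ M.powersetCard a, ∑ B ∈ (M \ A).powersetCard b,
      ∑ C ∈ ((M \ A) \ B).powersetCard c, (if C ∪ A ∈ F then 1 else 0 : ℕ)
    = (F.filter (fun S => S.card = a + c)).card
        * ((a + c).choose a * ((M.card - (a + c)).choose b)) := by
  calc
    ∑ A ∈ M.powersetCard a, ∑ B ∈ (M \ A).powersetCard b,
        ∑ C ∈ ((M \ A) \ B).powersetCard c, (if C ∪ A ∈ F then 1 else 0 : ℕ)
      = ∑ A ∈ M.powersetCard a, ∑ B ∈ (M \ A).powersetCard b,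
          ∑ C ∈ ((M \ B) \ A).powersetCard c, (if A ∪ C ∈ F then 1 else 0 : ℕ) := by
        refine Finset.sum_congr rfl fun A _ => Finset.sum_congr rfl fun B _ => ?_
        rw [sdiff_sdiff_union, Finset.union_comm A B, ← sdiff_sdiff_union]
        exact Finset.sum_congr rfl fun C _ => by rw [Finset.union_comm]
    _ = ∑ B ∈ M.powersetCard b, ∑ A ∈ (M \ B).powersetCard a,
          ∑ C ∈ ((M \ B) \ A).powersetCard c, (if A ∪ C ∈ F then 1 else 0 : ℕ) :=
        swap_sum M a b (fun A B =>
          ∑ C ∈ ((M \ B) \ A).powersetCard c, (if A ∪ C ∈ F then 1 else 0 : ℕ))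
    _ = ∑ B ∈ M.powersetCard b, ∑ D ∈ (M \ B).powersetCard (a + c),
          (a + c).choose a * (if D ∈ F then 1 else 0 : ℕ) :=
        Finset.sum_congr rfl fun B _ =>
          pair_union (M \ B) a c (fun D => (if D ∈ F then 1 else 0 : ℕ))
    _ = ∑ D ∈ M.powersetCard (a + c), ∑ _B ∈ (M \ D).powersetCard b,
          (a + c).choose a * (if D ∈ F then 1 else 0 : ℕ) :=
        swap_sum M b (a + c) (fun _B D => (a + c).choose a * (if D ∈ F then 1 else 0 : ℕ))
    _ = ∑ D ∈ M.powersetCard (a + c),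
          (if D ∈ F then 1 else 0 : ℕ)
            * ((a + c).choose a * ((M.card - (a + c)).choose b)) := by
        refine Finset.sum_congr rfl fun D hD => ?_
        rw [Finset.sum_const, smul_eq_mul, Finset.card_powersetCard, card_sdiff_mem hD]
        ring
    _ = _ := by rw [← Finset.sum_mul, sum_ind_eq M F hF]

lemma termAB (hF : F ⊆ M.powerset) (a b c : ℕ) :
    ∑ A ∈ M.powersetCard a, ∑ B ∈ (M \ A).powersetCard b,
      ∑ C ∈ ((M \ A) \ B).powersetCard c, (if A ∪ B ∈ F then 1 else 0 : ℕ)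
    = (F.filter (fun S => S.card = a + b)).card
        * ((a + b).choose a * ((M.card - (a + b)).choose c)) := by
  calc
    ∑ A ∈ M.powersetCard a, ∑ B ∈ (M \ A).powersetCard b,
        ∑ C ∈ ((M \ A) \ B).powersetCard c, (if A ∪ B ∈ F then 1 else 0 : ℕ)
      = ∑ A ∈ M.powersetCard a, ∑ B ∈ (M \ A).powersetCard b,
          (fun D => (if D ∈ F then 1 else 0 : ℕ) * (M.card - (a + b)).choose c) (A ∪ B) := by
        refine Finset.sum_congr rfl fun A hA => Finset.sum_congr rfl fun B hB => ?_
        simp only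
        rw [Finset.sum_const, smul_eq_mul, Finset.card_powersetCard, card_sdiff_mem hB,
          card_sdiff_mem hA, Nat.sub_sub]
        ring
    _ = ∑ D ∈ M.powersetCard (a + b),
          (a + b).choose a *
            ((if D ∈ F then 1 else 0 : ℕ) * (M.card - (a + b)).choose c) :=
        pair_union M a b (fun D => (if D ∈ F then 1 else 0 : ℕ) * (M.card - (a + b)).choose c)
    _ = ∑ D ∈ M.powersetCard (a + b),
          (if D ∈ F then 1 else 0 : ℕ)
            * ((a + b).choose a * ((M.card - (a + b)).choose c)) :=
        Finset.sum_congr rfl fun D _ => by ring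
    _ = _ := by rw [← Finset.sum_mul, sum_ind_eq M F hF]

lemma bound6 (F₁ F₂ F₃ : Finset (Finset ℕ)) (hcpf : CrossPartitionFree F₁ F₂ F₃)
    (B₁ B₂ B₃ : Finset ℕ) (h12 : Disjoint B₁ B₂) (h13 : Disjoint B₁ B₃)
    (h23 : Disjoint B₂ B₃) :
    (if B₁ ∈ F₁ then 1 else 0 : ℕ) + (if B₂ ∈ F₂ then 1 else 0)
      + (if B₃ ∈ F₃ then 1 else 0) + (if B₂ ∪ B₃ ∈ F₁ then 1 else 0)
      + (if B₃ ∪ B₁ ∈ F₂ then 1 else 0) + (if B₁ ∪ B₂ ∈ F₃ then 1 else 0) ≤ 4 := by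
  have h1 : ¬(B₂ ∪ B₃ ∈ F₁ ∧ B₂ ∈ F₂ ∧ B₃ ∈ F₃) := by
    rintro ⟨hA, hB, hC⟩
    exact hcpf ⟨B₂ ∪ B₃, hA, B₂, hB, B₃, hC,
      Or.inl ⟨Finset.disjoint_iff_inter_eq_empty.mp h23, rfl⟩⟩
  have h2 : ¬(B₁ ∈ F₁ ∧ B₃ ∪ B₁ ∈ F₂ ∧ B₃ ∈ F₃) := by
    rintro ⟨hA, hB, hC⟩
    exact hcpf ⟨B₁, hA, B₃ ∪ B₁, hB, B₃, hC,
      Or.inr (Or.inl ⟨Finset.disjoint_iff_inter_eq_empty.mp h13, Finset.union_comm _ _⟩)⟩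
  have h3 : ¬(B₁ ∈ F₁ ∧ B₂ ∈ F₂ ∧ B₁ ∪ B₂ ∈ F₃) := by
    rintro ⟨hA, hB, hC⟩
    exact hcpf ⟨B₁, hA, B₂, hB, B₁ ∪ B₂, hC,
      Or.inr (Or.inr ⟨Finset.disjoint_iff_inter_eq_empty.mp h12, rfl⟩)⟩
  by_cases m1 : B₁ ∈ F₁ <;> by_cases m2 : B₂ ∈ F₂ <;> by_cases m3 : B₃ ∈ F₃ <;>
    by_cases m4 : B₂ ∪ B₃ ∈ F₁ <;> by_cases m5 : B₃ ∪ B₁ ∈ F₂ <;>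
    by_cases m6 : B₁ ∪ B₂ ∈ F₃
  all_goals try exact absurd (And.intro m4 (And.intro m2 m3)) h1
  all_goals try exact absurd (And.intro m1 (And.intro m5 m3)) h2
  all_goals try exact absurd (And.intro m1 (And.intro m2 m6)) h3
  all_goals simp [m1, m2, m3, m4, m5, m6]

lemma swap12 {m a b : ℕ} (h : a + b ≤ m) :
    m.choose a * (m - a).choose b = m.choose b * (m - b).choose a := by
  have h1 := Nat.choose_mul (n := m) (k := a + b) (s := a) (Nat.le_add_right a b)
  have h2 := Nat.choose_mul (n := m) (k := a + b) (s := b) (Nat.le_add_left b a)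
  simp only [Nat.add_sub_cancel_left, Nat.add_sub_cancel] at h1 h2
  rw [Nat.choose_symm_add] at h1
  omega

/-- Ordered triple-selection count. -/
def P (n a b c : ℕ) : ℕ := n.choose a * ((n - a).choose b * ((n - a - b).choose c))

lemma P_comm2 {n a b c : ℕ} (h : a + b + c ≤ n) : P n a b c = P n a c b := by
  unfold P
  have hbc : b + c ≤ n - a := by omega
  rw [swap12 hbc]

lemma P_comm1 {n a b c : ℕ} (h : a + b + c ≤ n) : P n a b c = P n b a c := by
  unfold P
  have hab : a + b ≤ n := by omega
  have h1 : n - a - b = n - b - a := by omega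
  rw [← mul_assoc, ← mul_assoc, swap12 hab, h1]

lemma chm {m k j : ℕ} (h : k + j ≤ m) :
    m.choose (k + j) * (k + j).choose k = m.choose k * (m - k).choose j := by
  have := Nat.choose_mul (n := m) (k := k + j) (s := k) (Nat.le_add_right k j)
  simpa using this

end Stmt9Aux

open Finset Stmt9Aux in
theorem stmt_9 (n : ℕ) (F₁ F₂ F₃ : Finset (Finset ℕ))
    (hF₁ : F₁ ⊆ (Finset.range n).powerset)
    (hF₂ : F₂ ⊆ (Finset.range n).powerset)
    (hF₃ : F₃ ⊆ (Finset.range n).powerset)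
    (hcpf : CrossPartitionFree F₁ F₂ F₃)
    (s₁ s₂ s₃ : ℕ) (hs : s₁ + s₂ + s₃ ≤ n) :
    (missing n F₁ s₁ / (n.choose s₁ : ℝ) +
        missing n F₁ (s₂ + s₃) / (n.choose (s₂ + s₃) : ℝ)) +
      (missing n F₂ s₂ / (n.choose s₂ : ℝ) +
        missing n F₂ (s₃ + s₁) / (n.choose (s₃ + s₁) : ℝ)) +
      (missing n F₃ s₃ / (n.choose s₃ : ℝ) +
        missing n F₃ (s₁ + s₂) / (n.choose (s₁ + s₂) : ℝ)) ≥ 2 := by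
  classical
  rw [Nat.add_comm s₃ s₁]
  set M := Finset.range n with hMdef
  have hMcard : M.card = n := Finset.card_range n
  -- family slice counts
  set m₁ := (F₁.filter (fun S => S.card = s₁)).card with hm₁
  set m₂ := (F₂.filter (fun S => S.card = s₂)).card with hm₂
  set m₃ := (F₃.filter (fun S => S.card = s₃)).card with hm₃
  set m₄ := (F₁.filter (fun S => S.card = s₂ + s₃)).card with hm₄
  set m₅ := (F₂.filter (fun S => S.card = s₁ + s₃)).card with hm₅
  set m₆ := (F₃.filter (fun S => S.card = s₁ + s₂)).card with hm₆
  -- total ordered-triple count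
  set Npr := n.choose s₁ * ((n - s₁).choose s₂ * ((n - s₁ - s₂).choose s₃)) with hNpr
  -- the six coefficients
  set c₁ := (n - s₁).choose s₂ * ((n - s₁ - s₂).choose s₃) with hc₁
  set c₂ := (n - s₂).choose s₁ * ((n - s₁ - s₂).choose s₃) with hc₂
  set c₃ := (s₁ + s₂).choose s₁ * ((n - s₃).choose (s₁ + s₂)) with hc₃
  set c₄ := (s₂ + s₃).choose s₂ * ((n - (s₂ + s₃)).choose s₁) with hc₄
  set c₅ := (s₁ + s₃).choose s₁ * ((n - (s₁ + s₃)).choose s₂) with hc₅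
  set c₆ := (s₁ + s₂).choose s₁ * ((n - (s₁ + s₂)).choose s₃) with hc₆
  -- main counting inequality
  have key : m₁ * c₁ + m₂ * c₂ + m₃ * c₃ + m₄ * c₄ + m₅ * c₅ + m₆ * c₆ ≤ 4 * Npr := by
    have hsplit :
        m₁ * c₁ + m₂ * c₂ + m₃ * c₃ + m₄ * c₄ + m₅ * c₅ + m₆ * c₆
        = ∑ B₁ ∈ M.powersetCard s₁, ∑ B₂ ∈ (M \ B₁).powersetCard s₂,
            ∑ B₃ ∈ ((M \ B₁) \ B₂).powersetCard s₃,
              ((if B₁ ∈ F₁ then 1 else 0 : ℕ) + (if B₂ ∈ F₂ then 1 else 0)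
                + (if B₃ ∈ F₃ then 1 else 0) + (if B₂ ∪ B₃ ∈ F₁ then 1 else 0)
                + (if B₃ ∪ B₁ ∈ F₂ then 1 else 0) + (if B₁ ∪ B₂ ∈ F₃ then 1 else 0)) := by
      simp only [Finset.sum_add_distrib]
      rw [termA M F₁ hF₁ s₁ s₂ s₃, termB M F₂ hF₂ s₁ s₂ s₃, termC M F₃ hF₃ s₁ s₂ s₃,
        termBC M F₁ hF₁ s₁ s₂ s₃, termCA M F₂ hF₂ s₁ s₂ s₃, termAB M F₃ hF₃ s₁ s₂ s₃,
        hMcard]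
    rw [hsplit]
    have hle : ∀ B₁ ∈ M.powersetCard s₁, ∀ B₂ ∈ (M \ B₁).powersetCard s₂,
        ∀ B₃ ∈ ((M \ B₁) \ B₂).powersetCard s₃,
        ((if B₁ ∈ F₁ then 1 else 0 : ℕ) + (if B₂ ∈ F₂ then 1 else 0)
          + (if B₃ ∈ F₃ then 1 else 0) + (if B₂ ∪ B₃ ∈ F₁ then 1 else 0)
          + (if B₃ ∪ B₁ ∈ F₂ then 1 else 0) + (if B₁ ∪ B₂ ∈ F₃ then 1 else 0)) ≤ 4 := by
      intro B₁ hB₁ B₂ hB₂ B₃ hB₃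
      rw [Finset.mem_powersetCard] at hB₂ hB₃
      have h21 : Disjoint B₂ B₁ := (Finset.subset_sdiff.mp hB₂.1).2
      have h3' := Finset.subset_sdiff.mp hB₃.1
      have h32 : Disjoint B₃ B₂ := h3'.2
      have h31 : Disjoint B₃ B₁ := (Finset.subset_sdiff.mp h3'.1).2
      exact bound6 F₁ F₂ F₃ hcpf B₁ B₂ B₃ h21.symm h31.symm h32.symm
    calc
      ∑ B₁ ∈ M.powersetCard s₁, ∑ B₂ ∈ (M \ B₁).powersetCard s₂,
          ∑ B₃ ∈ ((M \ B₁) \ B₂).powersetCard s₃,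
            ((if B₁ ∈ F₁ then 1 else 0 : ℕ) + (if B₂ ∈ F₂ then 1 else 0)
              + (if B₃ ∈ F₃ then 1 else 0) + (if B₂ ∪ B₃ ∈ F₁ then 1 else 0)
              + (if B₃ ∪ B₁ ∈ F₂ then 1 else 0) + (if B₁ ∪ B₂ ∈ F₃ then 1 else 0))
        ≤ ∑ B₁ ∈ M.powersetCard s₁, ∑ B₂ ∈ (M \ B₁).powersetCard s₂,
            ∑ _B₃ ∈ ((M \ B₁) \ B₂).powersetCard s₃, (4 : ℕ) := by
          refine Finset.sum_le_sum fun B₁ hB₁ => Finset.sum_le_sum fun B₂ hB₂ =>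
            Finset.sum_le_sum fun B₃ hB₃ => ?_
          exact hle B₁ hB₁ B₂ hB₂ B₃ hB₃
      _ = 4 * Npr := by
          have h1 : ∀ B₁ ∈ M.powersetCard s₁,
              (∑ B₂ ∈ (M \ B₁).powersetCard s₂,
                ∑ _B₃ ∈ ((M \ B₁) \ B₂).powersetCard s₃, (4 : ℕ))
              = (n - s₁).choose s₂ * ((n - s₁ - s₂).choose s₃ * 4) := by
            intro B₁ hB₁
            rw [two_const, card_sdiff_mem hB₁, hMcard]
          rw [Finset.sum_congr rfl h1, Finset.sum_const, smul_eq_mul,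
            Finset.card_powersetCard, hMcard, hNpr, hc₁]
          ring
  -- binomial identities: each column product equals Npr
  have e₁ : n.choose s₁ * c₁ = Npr := by rw [hc₁, hNpr]
  have e₂ : n.choose s₂ * c₂ = Npr := by
    have h := P_comm1 (n := n) (a := s₂) (b := s₁) (c := s₃) (by omega)
    unfold P at h
    have hx : n - s₂ - s₁ = n - s₁ - s₂ := by omega
    rw [hx] at h
    rw [hc₂, hNpr]
    exact h.trans rfl
  have e₃ : n.choose s₃ * c₃ = Npr := by
    have h1 := chm (m := n - s₃) (k := s₁) (j := s₂) (by omega)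
    have h2 : P n s₃ s₁ s₂ = P n s₁ s₃ s₂ := P_comm1 (by omega)
    have h3 : P n s₁ s₃ s₂ = P n s₁ s₂ s₃ := P_comm2 (by omega)
    calc n.choose s₃ * c₃
        = n.choose s₃ * ((n - s₃).choose (s₁ + s₂) * (s₁ + s₂).choose s₁) := by
          rw [hc₃]; ring
      _ = n.choose s₃ * ((n - s₃).choose s₁ * (n - s₃ - s₁).choose s₂) := by rw [h1]
      _ = P n s₃ s₁ s₂ := by unfold P; ring
      _ = P n s₁ s₂ s₃ := h2.trans h3
      _ = Npr := by unfold P; rw [hNpr]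
  have e₄ : n.choose (s₂ + s₃) * c₄ = Npr := by
    have h1 := chm (m := n) (k := s₂) (j := s₃) (by omega)
    have hx : n - (s₂ + s₃) = n - s₂ - s₃ := by omega
    have h2 : P n s₂ s₃ s₁ = P n s₂ s₁ s₃ := P_comm2 (by omega)
    have h3 : P n s₂ s₁ s₃ = P n s₁ s₂ s₃ := P_comm1 (by omega)
    calc n.choose (s₂ + s₃) * c₄
        = n.choose (s₂ + s₃) * (s₂ + s₃).choose s₂ * (n - (s₂ + s₃)).choose s₁ := by
          rw [hc₄]; ring
      _ = n.choose s₂ * (n - s₂).choose s₃ * (n - s₂ - s₃).choose s₁ := by rw [h1, hx]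
      _ = P n s₂ s₃ s₁ := by unfold P; ring
      _ = P n s₁ s₂ s₃ := h2.trans h3
      _ = Npr := by unfold P; rw [hNpr]
  have e₅ : n.choose (s₁ + s₃) * c₅ = Npr := by
    have h1 := chm (m := n) (k := s₁) (j := s₃) (by omega)
    have hx : n - (s₁ + s₃) = n - s₁ - s₃ := by omega
    have h2 : P n s₁ s₃ s₂ = P n s₁ s₂ s₃ := P_comm2 (by omega)
    calc n.choose (s₁ + s₃) * c₅
        = n.choose (s₁ + s₃) * (s₁ + s₃).choose s₁ * (n - (s₁ + s₃)).choose s₂ := by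
          rw [hc₅]; ring
      _ = n.choose s₁ * (n - s₁).choose s₃ * (n - s₁ - s₃).choose s₂ := by rw [h1, hx]
      _ = P n s₁ s₃ s₂ := by unfold P; ring
      _ = P n s₁ s₂ s₃ := h2
      _ = Npr := by unfold P; rw [hNpr]
  have e₆ : n.choose (s₁ + s₂) * c₆ = Npr := by
    have h1 := chm (m := n) (k := s₁) (j := s₂) (by omega)
    have hx : n - (s₁ + s₂) = n - s₁ - s₂ := by omega
    calc n.choose (s₁ + s₂) * c₆
        = n.choose (s₁ + s₂) * (s₁ + s₂).choose s₁ * (n - (s₁ + s₂)).choose s₃ := by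
          rw [hc₆]; ring
      _ = n.choose s₁ * (n - s₁).choose s₂ * (n - s₁ - s₂).choose s₃ := by rw [h1, hx]
      _ = Npr := by rw [hNpr]; ring
  -- positivity
  have hch : ∀ t : ℕ, t ≤ n → (0 : ℝ) < (n.choose t : ℝ) := by
    intro t ht
    exact_mod_cast Nat.choose_pos ht
  have hC₁ := hch s₁ (by omega)
  have hC₂ := hch s₂ (by omega)
  have hC₃ := hch s₃ (by omega)
  have hC₄ := hch (s₂ + s₃) (by omega)
  have hC₅ := hch (s₁ + s₃) (by omega)
  have hC₆ := hch (s₁ + s₂) (by omega)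
  have hNpos : (0 : ℝ) < (Npr : ℝ) := by
    have : 0 < Npr := by
      rw [hNpr]
      exact Nat.mul_pos (Nat.choose_pos (by omega))
        (Nat.mul_pos (Nat.choose_pos (by omega)) (Nat.choose_pos (by omega)))
    exact_mod_cast this
  -- fractions rewritten over the common denominator Npr
  have hfrac : ∀ (mv cv t : ℕ), n.choose t * cv = Npr → (0 : ℝ) < (n.choose t : ℝ) →
      (mv : ℝ) / (n.choose t : ℝ) = (mv * cv : ℝ) / (Npr : ℝ) := by
    intro mv cv t hid hpos
    have hNc : ((Npr : ℕ) : ℝ) = (n.choose t : ℝ) * (cv : ℝ) := by exact_mod_cast hid.symm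
    rw [eq_div_iff (ne_of_gt hNpos), hNc]
    field_simp
  have f₁ := hfrac m₁ c₁ s₁ e₁ hC₁
  have f₂ := hfrac m₂ c₂ s₂ e₂ hC₂
  have f₃ := hfrac m₃ c₃ s₃ e₃ hC₃
  have f₄ := hfrac m₄ c₄ (s₂ + s₃) e₄ hC₄
  have f₅ := hfrac m₅ c₅ (s₁ + s₃) e₅ hC₅
  have f₆ := hfrac m₆ c₆ (s₁ + s₂) e₆ hC₆
  have hsum : (m₁ : ℝ) / (n.choose s₁ : ℝ) + (m₄ : ℝ) / (n.choose (s₂ + s₃) : ℝ)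
      + (m₂ : ℝ) / (n.choose s₂ : ℝ) + (m₅ : ℝ) / (n.choose (s₁ + s₃) : ℝ)
      + (m₃ : ℝ) / (n.choose s₃ : ℝ) + (m₆ : ℝ) / (n.choose (s₁ + s₂) : ℝ) ≤ 4 := by
    rw [f₁, f₂, f₃, f₄, f₅, f₆]
    rw [← add_div, ← add_div, ← add_div, ← add_div,
      ← add_div]
    rw [div_le_iff₀ hNpos]
    have : ((m₁ * c₁ + m₂ * c₂ + m₃ * c₃ + m₄ * c₄ + m₅ * c₅ + m₆ * c₆ : ℕ) : ℝ)
        ≤ ((4 * Npr : ℕ) : ℝ) := by exact_mod_cast key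
    push_cast at this ⊢
    linarith
  -- rewrite each `missing` term and conclude
  have hmiss : ∀ (F : Finset (Finset ℕ)) (t : ℕ), (0 : ℝ) < (n.choose t : ℝ) →
      missing n F t / (n.choose t : ℝ)
        = 1 - ((F.filter (fun S => S.card = t)).card : ℝ) / (n.choose t : ℝ) := by
    intro F t hpos
    unfold missing
    rw [sub_div, div_self (ne_of_gt hpos)]
  rw [hmiss F₁ s₁ hC₁, hmiss F₁ (s₂ + s₃) hC₄, hmiss F₂ s₂ hC₂, hmiss F₂ (s₁ + s₃) hC₅,
    hmiss F₃ s₃ hC₃, hmiss F₃ (s₁ + s₂) hC₆]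
  rw [← hm₁, ← hm₂, ← hm₃, ← hm₄, ← hm₅, ← hm₆]
  linarith
end

section
/- Let F ⊆ 2^[n] be a partition-free family and let s₁, s₂, s₃ be nonnegative integers with s₁ + s₂ + s₃ ≤ n. Let y^t = C(n,t) − |{F ∈ F : |F| = t}|. Then ∑_{i=1}^{3} [ y^{s_i}/C(n,s_i) + y^{s_{i+1}+s_{i-1}}/C(n, s_{i+1}+s_{i-1}) ] ≥ 2, with cyclic index conventions on {1,2,3}. -/
open Finset

lemma chooseQ {m a b : ℕ} (h : a + b ≤ m) :
    m.choose (a + b) * (a + b).choose a = m.choose a * (m - a).choose b := by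
  have := Nat.choose_mul (n := m) (k := a + b) (s := a) (Nat.le_add_right a b)
  simpa using this

lemma chooseP {m a b : ℕ} (h : a + b ≤ m) :
    m.choose a * (m - a).choose b = m.choose b * (m - b).choose a := by
  have hs : (a + b).choose a = (a + b).choose b := by
    rw [← Nat.choose_symm (Nat.le_add_right a b), Nat.add_sub_cancel_left]
  rw [← chooseQ h, hs, Nat.add_comm a b, chooseQ (by omega : b + a ≤ m)]

lemma pc_sdiff (Y B : Finset ℕ) (c : ℕ) :
    (Y \ B).powersetCard c = (Y.powersetCard c).filter (fun C => Disjoint C B) := by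
  ext C
  simp only [mem_powersetCard, subset_sdiff, mem_filter]
  tauto

lemma swap_sum (Y : Finset ℕ) (b c : ℕ) (g : Finset ℕ → Finset ℕ → ℕ) :
    ∑ B ∈ Y.powersetCard b, ∑ C ∈ (Y \ B).powersetCard c, g B C
      = ∑ C ∈ Y.powersetCard c, ∑ B ∈ (Y \ C).powersetCard b, g B C := by
  simp only [pc_sdiff, sum_filter]
  rw [Finset.sum_comm]
  refine sum_congr rfl fun C _ => sum_congr rfl fun B _ => ?_
  simp only [disjoint_comm]

lemma merge_sum (Y : Finset ℕ) (b c : ℕ) (g : Finset ℕ → ℕ) :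
    ∑ B ∈ Y.powersetCard b, ∑ C ∈ (Y \ B).powersetCard c, g (B ∪ C)
      = ∑ T ∈ Y.powersetCard (b + c), (b + c).choose b * g T := by
  have step1 : ∀ B ∈ Y.powersetCard b,
      ∑ C ∈ (Y \ B).powersetCard c, g (B ∪ C)
        = ∑ T ∈ (Y.powersetCard (b + c)).filter (fun T => B ⊆ T), g T := by
    intro B hB
    rw [mem_powersetCard] at hB
    refine Finset.sum_nbij' (i := fun C => B ∪ C) (j := fun T => T \ B) ?_ ?_ ?_ ?_ ?_
    · intro C hC
      rw [mem_powersetCard, subset_sdiff] at hC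
      rw [mem_filter, mem_powersetCard]
      refine ⟨⟨union_subset hB.1 hC.1.1, ?_⟩, subset_union_left⟩
      rw [card_union_of_disjoint (disjoint_comm.mp hC.1.2), hB.2, hC.2]
    · intro T hT
      rw [mem_filter, mem_powersetCard] at hT
      rw [mem_powersetCard, subset_sdiff]
      refine ⟨⟨sdiff_subset.trans hT.1.1, sdiff_disjoint⟩, ?_⟩
      rw [card_sdiff_of_subset hT.2, hT.1.2, hB.2, Nat.add_sub_cancel_left]
    · intro C hC
      rw [mem_powersetCard, subset_sdiff] at hC
      exact union_sdiff_cancel_left (disjoint_comm.mp hC.1.2)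
    · intro T hT
      rw [mem_filter] at hT
      exact union_sdiff_of_subset hT.2
    · intro C _; rfl
  rw [Finset.sum_congr rfl step1]
  simp only [sum_filter]
  rw [Finset.sum_comm]
  refine sum_congr rfl fun T hT => ?_
  rw [← sum_filter]
  have hTfilter : (Y.powersetCard b).filter (fun B => B ⊆ T) = T.powersetCard b := by
    rw [mem_powersetCard] at hT
    ext B
    simp only [mem_filter, mem_powersetCard]
    exact ⟨fun h => ⟨h.2, h.1.2⟩, fun h => ⟨⟨h.1.trans hT.1, h.2⟩, h.1⟩⟩
  rw [hTfilter, sum_const, card_powersetCard, (mem_powersetCard.mp hT).2, smul_eq_mul]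

lemma const_sum' (Y : Finset ℕ) (c k cardY : ℕ) (h : Y.card = cardY) :
    ∑ _C ∈ Y.powersetCard c, k = cardY.choose c * k := by
  rw [sum_const, card_powersetCard, h, smul_eq_mul]

lemma pointwise (F : Finset (Finset ℕ)) (hpf : PartitionFree F)
    (A B C : Finset ℕ) (hAB : Disjoint A B) (hAC : Disjoint A C) (hBC : Disjoint B C) :
    2 ≤ (if A ∈ F then 0 else 1) + (if B ∈ F then 0 else 1) + (if C ∈ F then 0 else 1)
      + (if B ∪ C ∈ F then 0 else 1) + (if C ∪ A ∈ F then 0 else 1)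
      + (if A ∪ B ∈ F then (0:ℕ) else 1) := by
  have no_union : ∀ P Q : Finset ℕ, P ∈ F → Q ∈ F → Disjoint P Q → P ∪ Q ∉ F := by
    intro P Q hP hQ hd hu
    exact hpf ⟨P ∪ Q, hu, P, hP, Q, hQ, by rwa [← Finset.disjoint_iff_inter_eq_empty], rfl⟩
  by_cases hA : A ∈ F <;> by_cases hB : B ∈ F <;> by_cases hC : C ∈ F
  · simp [hA, hB, hC, no_union B C hB hC hBC, no_union C A hC hA hAC.symm,
      no_union A B hA hB hAB]
  · simp only [hA, hB, hC, no_union A B hA hB hAB, if_true, if_false]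
    split_ifs <;> omega
  · simp only [hA, hB, hC, no_union C A hC hA hAC.symm, if_true, if_false]
    split_ifs <;> omega
  · simp only [hA, hB, hC, if_true, if_false]; split_ifs <;> omega
  · simp only [hA, hB, hC, no_union B C hB hC hBC, if_true, if_false]
    split_ifs <;> omega
  · simp only [hA, hB, hC, if_true, if_false]; split_ifs <;> omega
  · simp only [hA, hB, hC, if_true, if_false]; split_ifs <;> omega
  · simp only [hA, hB, hC, if_true, if_false]; split_ifs <;> omega

theorem stmt_10 (n : ℕ) (F : Finset (Finset ℕ))
    (hF : F ⊆ (Finset.range n).powerset)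
    (hpf : PartitionFree F)
    (s₁ s₂ s₃ : ℕ) (hs : s₁ + s₂ + s₃ ≤ n) :
    (missing n F s₁ / (n.choose s₁ : ℝ) +
        missing n F (s₂ + s₃) / (n.choose (s₂ + s₃) : ℝ)) +
      (missing n F s₂ / (n.choose s₂ : ℝ) +
        missing n F (s₃ + s₁) / (n.choose (s₃ + s₁) : ℝ)) +
      (missing n F s₃ / (n.choose s₃ : ℝ) +
        missing n F (s₁ + s₂) / (n.choose (s₁ + s₂) : ℝ)) ≥ 2 := by
  classical
  set X := Finset.range n with hX
  set e : Finset ℕ → ℕ := fun S => if S ∈ F then 0 else 1 with he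
  set m : ℕ → ℕ := fun t => ((X.powersetCard t).filter (fun S => S ∉ F)).card with hm
  have hcardX : X.card = n := Finset.card_range n
  have hc1 : ∀ t : ℕ, ∀ A ∈ X.powersetCard t, (X \ A).card = n - t := by
    intro t A hA
    rw [mem_powersetCard] at hA
    rw [card_sdiff_of_subset hA.1, hA.2, hcardX]
  have hc2 : ∀ t u : ℕ, ∀ A ∈ X.powersetCard t, ∀ B ∈ (X \ A).powersetCard u,
      ((X \ A) \ B).card = n - t - u := by
    intro t u A hA B hB
    rw [mem_powersetCard] at hB
    rw [card_sdiff_of_subset hB.1, hB.2, hc1 t A hA]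
  have sum_e : ∀ t : ℕ, ∑ S ∈ X.powersetCard t, e S = m t := by
    intro t
    rw [hm, he]
    simp [sum_ite, Finset.filter_filter]
  set N : ℕ := n.choose s₁ * ((n - s₁).choose s₂ * ((n - s₁ - s₂).choose s₃)) with hN
  -- Marginals
  have hM1 : ∑ A ∈ X.powersetCard s₁, ∑ B ∈ (X \ A).powersetCard s₂,
      ∑ C ∈ ((X \ A) \ B).powersetCard s₃, e A
      = m s₁ * ((n - s₁).choose s₂ * (n - s₁ - s₂).choose s₃) := by
    have h1 : ∀ A ∈ X.powersetCard s₁, (∑ B ∈ (X \ A).powersetCard s₂,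
        ∑ C ∈ ((X \ A) \ B).powersetCard s₃, e A)
        = (n - s₁).choose s₂ * ((n - s₁ - s₂).choose s₃ * e A) := by
      intro A hA
      rw [sum_congr rfl (fun B hB => const_sum' _ _ _ _ (hc2 s₁ s₂ A hA B hB)),
        const_sum' _ _ _ _ (hc1 s₁ A hA)]
    rw [sum_congr rfl h1, ← Finset.mul_sum, ← Finset.mul_sum, sum_e]
    ring
  have hM2 : ∑ A ∈ X.powersetCard s₁, ∑ B ∈ (X \ A).powersetCard s₂,
      ∑ C ∈ ((X \ A) \ B).powersetCard s₃, e B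
      = m s₂ * ((n - s₂).choose s₁ * (n - s₁ - s₂).choose s₃) := by
    have h1 : ∀ A ∈ X.powersetCard s₁, (∑ B ∈ (X \ A).powersetCard s₂,
        ∑ C ∈ ((X \ A) \ B).powersetCard s₃, e B)
        = ∑ B ∈ (X \ A).powersetCard s₂, (n - s₁ - s₂).choose s₃ * e B :=
      fun A hA => sum_congr rfl fun B hB => const_sum' _ _ _ _ (hc2 s₁ s₂ A hA B hB)
    rw [sum_congr rfl h1, swap_sum X s₁ s₂ (fun A B => (n - s₁ - s₂).choose s₃ * e B),
      sum_congr rfl (fun B hB => const_sum' _ _ _ _ (hc1 s₂ B hB)),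
      ← Finset.mul_sum]
    rw [← Finset.mul_sum, sum_e]
    ring
  have hM3 : ∑ A ∈ X.powersetCard s₁, ∑ B ∈ (X \ A).powersetCard s₂,
      ∑ C ∈ ((X \ A) \ B).powersetCard s₃, e C
      = m s₃ * ((n - s₃).choose s₁ * (n - s₁ - s₃).choose s₂) := by
    have h1 : ∀ A ∈ X.powersetCard s₁, (∑ B ∈ (X \ A).powersetCard s₂,
        ∑ C ∈ ((X \ A) \ B).powersetCard s₃, e C)
        = ∑ C ∈ (X \ A).powersetCard s₃, (n - s₁ - s₃).choose s₂ * e C := by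
      intro A hA
      rw [swap_sum (X \ A) s₂ s₃ (fun B C => e C)]
      exact sum_congr rfl fun C hC => const_sum' _ _ _ _ (hc2 s₁ s₃ A hA C hC)
    rw [sum_congr rfl h1, swap_sum X s₁ s₃ (fun A C => (n - s₁ - s₃).choose s₂ * e C),
      sum_congr rfl (fun C hC => const_sum' _ _ _ _ (hc1 s₃ C hC)),
      ← Finset.mul_sum, ← Finset.mul_sum, sum_e]
    ring
  have hM23 : ∑ A ∈ X.powersetCard s₁, ∑ B ∈ (X \ A).powersetCard s₂,
      ∑ C ∈ ((X \ A) \ B).powersetCard s₃, e (B ∪ C)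
      = m (s₂ + s₃) * ((n - (s₂ + s₃)).choose s₁ * (s₂ + s₃).choose s₂) := by
    have h1 : ∀ A ∈ X.powersetCard s₁, (∑ B ∈ (X \ A).powersetCard s₂,
        ∑ C ∈ ((X \ A) \ B).powersetCard s₃, e (B ∪ C))
        = ∑ T ∈ (X \ A).powersetCard (s₂ + s₃), (s₂ + s₃).choose s₂ * e T :=
      fun A _ => merge_sum (X \ A) s₂ s₃ e
    rw [sum_congr rfl h1, swap_sum X s₁ (s₂ + s₃) (fun A T => (s₂ + s₃).choose s₂ * e T),
      sum_congr rfl (fun T hT => const_sum' _ _ _ _ (hc1 (s₂ + s₃) T hT)),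
      ← Finset.mul_sum, ← Finset.mul_sum, sum_e]
    ring
  have hM31 : ∑ A ∈ X.powersetCard s₁, ∑ B ∈ (X \ A).powersetCard s₂,
      ∑ C ∈ ((X \ A) \ B).powersetCard s₃, e (C ∪ A)
      = m (s₁ + s₃) * ((s₁ + s₃).choose s₁ * (n - s₁ - s₃).choose s₂) := by
    have h1 : ∀ A ∈ X.powersetCard s₁, (∑ B ∈ (X \ A).powersetCard s₂,
        ∑ C ∈ ((X \ A) \ B).powersetCard s₃, e (C ∪ A))
        = ∑ C ∈ (X \ A).powersetCard s₃, (n - s₁ - s₃).choose s₂ * e (A ∪ C) := by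
      intro A hA
      rw [swap_sum (X \ A) s₂ s₃ (fun B C => e (C ∪ A))]
      refine sum_congr rfl fun C hC => ?_
      rw [union_comm C A]
      exact const_sum' _ _ _ _ (hc2 s₁ s₃ A hA C hC)
    rw [sum_congr rfl h1,
      merge_sum X s₁ s₃ (fun T => (n - s₁ - s₃).choose s₂ * e T),
      ← Finset.mul_sum]
    rw [← Finset.mul_sum, sum_e]
    ring
  have hM12 : ∑ A ∈ X.powersetCard s₁, ∑ B ∈ (X \ A).powersetCard s₂,
      ∑ C ∈ ((X \ A) \ B).powersetCard s₃, e (A ∪ B)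
      = m (s₁ + s₂) * ((s₁ + s₂).choose s₁ * (n - s₁ - s₂).choose s₃) := by
    have h1 : ∀ A ∈ X.powersetCard s₁, (∑ B ∈ (X \ A).powersetCard s₂,
        ∑ C ∈ ((X \ A) \ B).powersetCard s₃, e (A ∪ B))
        = ∑ B ∈ (X \ A).powersetCard s₂, (n - s₁ - s₂).choose s₃ * e (A ∪ B) :=
      fun A hA => sum_congr rfl fun B hB => const_sum' _ _ _ _ (hc2 s₁ s₂ A hA B hB)
    rw [sum_congr rfl h1,
      merge_sum X s₁ s₂ (fun T => (n - s₁ - s₂).choose s₃ * e T),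
      ← Finset.mul_sum, ← Finset.mul_sum, sum_e]
    ring
  -- lower bound
  have hlow : 2 * N ≤ ∑ A ∈ X.powersetCard s₁, ∑ B ∈ (X \ A).powersetCard s₂,
      ∑ C ∈ ((X \ A) \ B).powersetCard s₃,
      (e A + e B + e C + e (B ∪ C) + e (C ∪ A) + e (A ∪ B)) := by
    have hconst : ∑ A ∈ X.powersetCard s₁, ∑ B ∈ (X \ A).powersetCard s₂,
        ∑ C ∈ ((X \ A) \ B).powersetCard s₃, 2 = 2 * N := by
      have h1 : ∀ A ∈ X.powersetCard s₁, (∑ B ∈ (X \ A).powersetCard s₂,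
          ∑ C ∈ ((X \ A) \ B).powersetCard s₃, 2)
          = (n - s₁).choose s₂ * ((n - s₁ - s₂).choose s₃ * 2) := by
        intro A hA
        rw [sum_congr rfl (fun B hB => const_sum' _ _ _ _ (hc2 s₁ s₂ A hA B hB)),
          const_sum' _ _ _ _ (hc1 s₁ A hA)]
      rw [sum_congr rfl h1, const_sum' _ _ _ _ hcardX, hN]
      ring
    rw [← hconst]
    refine sum_le_sum fun A hA => sum_le_sum fun B hB => sum_le_sum fun C hC => ?_
    rw [mem_powersetCard, subset_sdiff] at hB
    rw [mem_powersetCard, subset_sdiff] at hC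
    have hCX : C ⊆ X \ A := hC.1.1
    have hAB : Disjoint A B := (disjoint_comm.mp hB.1.2)
    have hBC : Disjoint B C := (disjoint_comm.mp hC.1.2)
    have hAC : Disjoint A C := by
      have := (subset_sdiff.mp hCX).2
      exact disjoint_comm.mp this
    exact pointwise F hpf A B C hAB hAC hBC
  -- total split
  have hsplit : ∑ A ∈ X.powersetCard s₁, ∑ B ∈ (X \ A).powersetCard s₂,
      ∑ C ∈ ((X \ A) \ B).powersetCard s₃,
      (e A + e B + e C + e (B ∪ C) + e (C ∪ A) + e (A ∪ B))
      = (∑ A ∈ X.powersetCard s₁, ∑ B ∈ (X \ A).powersetCard s₂,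
          ∑ C ∈ ((X \ A) \ B).powersetCard s₃, e A)
        + (∑ A ∈ X.powersetCard s₁, ∑ B ∈ (X \ A).powersetCard s₂,
          ∑ C ∈ ((X \ A) \ B).powersetCard s₃, e B)
        + (∑ A ∈ X.powersetCard s₁, ∑ B ∈ (X \ A).powersetCard s₂,
          ∑ C ∈ ((X \ A) \ B).powersetCard s₃, e C)
        + (∑ A ∈ X.powersetCard s₁, ∑ B ∈ (X \ A).powersetCard s₂,
          ∑ C ∈ ((X \ A) \ B).powersetCard s₃, e (B ∪ C))
        + (∑ A ∈ X.powersetCard s₁, ∑ B ∈ (X \ A).powersetCard s₂,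
          ∑ C ∈ ((X \ A) \ B).powersetCard s₃, e (C ∪ A))
        + (∑ A ∈ X.powersetCard s₁, ∑ B ∈ (X \ A).powersetCard s₂,
          ∑ C ∈ ((X \ A) \ B).powersetCard s₃, e (A ∪ B)) := by
    simp only [Finset.sum_add_distrib]
  have hkey : 2 * N ≤ m s₁ * ((n - s₁).choose s₂ * (n - s₁ - s₂).choose s₃)
      + m (s₂ + s₃) * ((n - (s₂ + s₃)).choose s₁ * (s₂ + s₃).choose s₂)
      + m s₂ * ((n - s₂).choose s₁ * (n - s₁ - s₂).choose s₃)
      + m (s₁ + s₃) * ((s₁ + s₃).choose s₁ * (n - s₁ - s₃).choose s₂)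
      + m s₃ * ((n - s₃).choose s₁ * (n - s₁ - s₃).choose s₂)
      + m (s₁ + s₂) * ((s₁ + s₂).choose s₁ * (n - s₁ - s₂).choose s₃) := by
    calc 2 * N ≤ _ := hlow
    _ = _ := hsplit
    _ = _ := by rw [hM1, hM2, hM3, hM23, hM31, hM12]; ring
  -- real part
  have hN0 : 0 < N := by
    rw [hN]
    have h1 : 0 < n.choose s₁ := Nat.choose_pos (by omega)
    have h2 : 0 < (n - s₁).choose s₂ := Nat.choose_pos (by omega)
    have h3 : 0 < (n - s₁ - s₂).choose s₃ := Nat.choose_pos (by omega)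
    positivity
  have hmiss : ∀ t : ℕ, missing n F t = (m t : ℝ) := by
    intro t
    have hfilter : F.filter (fun S => S.card = t)
        = (X.powersetCard t).filter (fun S => S ∈ F) := by
      ext S
      simp only [mem_filter, mem_powersetCard]
      constructor
      · rintro ⟨hS, hc⟩
        exact ⟨⟨Finset.mem_powerset.mp (hF hS), hc⟩, hS⟩
      · rintro ⟨⟨_, hc⟩, hS⟩; exact ⟨hS, hc⟩
    have hsp : ((X.powersetCard t).filter (fun S => S ∈ F)).card + m t = n.choose t := by
      simp only [hm]
      have h := Finset.card_filter_add_card_filter_not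
        (s := X.powersetCard t) (p := fun S => S ∈ F)
      rw [card_powersetCard, hcardX] at h
      convert h using 3
    rw [missing, hfilter]
    have h2 := congrArg (fun k : ℕ => (k : ℝ)) hsp
    push_cast at h2
    linarith
  have key_div : ∀ t c : ℕ, n.choose t * c = N →
      missing n F t / (n.choose t : ℝ) = ((m t * c : ℕ) : ℝ) / (N : ℝ) := by
    intro t c hc
    have hch : 0 < n.choose t := by
      rcases Nat.eq_zero_or_pos (n.choose t) with h | h
      · rw [h, Nat.zero_mul] at hc; omega
      · exact h
    have hc0 : 0 < c := by
      rcases Nat.eq_zero_or_pos c with h | h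
      · rw [h, Nat.mul_zero] at hc; omega
      · exact h
    have hch' : (0:ℝ) < (n.choose t : ℝ) := by exact_mod_cast hch
    have hcc : (0:ℝ) < (c : ℝ) := by exact_mod_cast hc0
    rw [hmiss t, ← hc]
    push_cast
    rw [div_eq_div_iff hch'.ne' (by positivity)]
    ring
  have e1 : n.choose s₁ * ((n - s₁).choose s₂ * (n - s₁ - s₂).choose s₃) = N := by rw [hN]
  have e2 : n.choose s₂ * ((n - s₂).choose s₁ * (n - s₁ - s₂).choose s₃) = N := by
    have h1 := chooseP (m := n) (a := s₂) (b := s₁) (by omega)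
    rw [hN]
    calc n.choose s₂ * ((n - s₂).choose s₁ * (n - s₁ - s₂).choose s₃)
        = (n.choose s₂ * (n - s₂).choose s₁) * (n - s₁ - s₂).choose s₃ := by ring
      _ = (n.choose s₁ * (n - s₁).choose s₂) * (n - s₁ - s₂).choose s₃ := by rw [h1]
      _ = n.choose s₁ * ((n - s₁).choose s₂ * (n - s₁ - s₂).choose s₃) := by ring
  have e3 : n.choose s₃ * ((n - s₃).choose s₁ * (n - s₁ - s₃).choose s₂) = N := by
    have h1 := chooseP (m := n) (a := s₃) (b := s₁) (by omega)
    have h2 := chooseP (m := n - s₁) (a := s₃) (b := s₂) (by omega)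
    rw [hN]
    calc n.choose s₃ * ((n - s₃).choose s₁ * (n - s₁ - s₃).choose s₂)
        = (n.choose s₃ * (n - s₃).choose s₁) * (n - s₁ - s₃).choose s₂ := by ring
      _ = (n.choose s₁ * (n - s₁).choose s₃) * (n - s₁ - s₃).choose s₂ := by rw [h1]
      _ = n.choose s₁ * ((n - s₁).choose s₃ * (n - s₁ - s₃).choose s₂) := by ring
      _ = n.choose s₁ * ((n - s₁).choose s₂ * (n - s₁ - s₂).choose s₃) := by rw [h2]
  have e23 : n.choose (s₂ + s₃) * ((n - (s₂ + s₃)).choose s₁ * (s₂ + s₃).choose s₂) = N := by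
    have h1 := chooseP (m := n) (a := s₂ + s₃) (b := s₁) (by omega)
    have h2 := chooseQ (m := n - s₁) (a := s₂) (b := s₃) (by omega)
    rw [hN]
    calc n.choose (s₂ + s₃) * ((n - (s₂ + s₃)).choose s₁ * (s₂ + s₃).choose s₂)
        = (n.choose (s₂ + s₃) * (n - (s₂ + s₃)).choose s₁) * (s₂ + s₃).choose s₂ := by ring
      _ = (n.choose s₁ * (n - s₁).choose (s₂ + s₃)) * (s₂ + s₃).choose s₂ := by rw [h1]
      _ = n.choose s₁ * ((n - s₁).choose (s₂ + s₃) * (s₂ + s₃).choose s₂) := by ring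
      _ = n.choose s₁ * ((n - s₁).choose s₂ * (n - s₁ - s₂).choose s₃) := by rw [h2]
  have e31 : n.choose (s₃ + s₁) * ((s₁ + s₃).choose s₁ * (n - s₁ - s₃).choose s₂) = N := by
    have h1 := chooseQ (m := n) (a := s₁) (b := s₃) (by omega)
    have h2 := chooseP (m := n - s₁) (a := s₃) (b := s₂) (by omega)
    rw [hN, Nat.add_comm s₃ s₁]
    calc n.choose (s₁ + s₃) * ((s₁ + s₃).choose s₁ * (n - s₁ - s₃).choose s₂)
        = (n.choose (s₁ + s₃) * (s₁ + s₃).choose s₁) * (n - s₁ - s₃).choose s₂ := by ring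
      _ = (n.choose s₁ * (n - s₁).choose s₃) * (n - s₁ - s₃).choose s₂ := by rw [h1]
      _ = n.choose s₁ * ((n - s₁).choose s₃ * (n - s₁ - s₃).choose s₂) := by ring
      _ = n.choose s₁ * ((n - s₁).choose s₂ * (n - s₁ - s₂).choose s₃) := by rw [h2]
  have e12 : n.choose (s₁ + s₂) * ((s₁ + s₂).choose s₁ * (n - s₁ - s₂).choose s₃) = N := by
    have h1 := chooseQ (m := n) (a := s₁) (b := s₂) (by omega)
    rw [hN]
    calc n.choose (s₁ + s₂) * ((s₁ + s₂).choose s₁ * (n - s₁ - s₂).choose s₃)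
        = (n.choose (s₁ + s₂) * (s₁ + s₂).choose s₁) * (n - s₁ - s₂).choose s₃ := by ring
      _ = (n.choose s₁ * (n - s₁).choose s₂) * (n - s₁ - s₂).choose s₃ := by rw [h1]
      _ = n.choose s₁ * ((n - s₁).choose s₂ * (n - s₁ - s₂).choose s₃) := by ring
  have hNR : (0:ℝ) < (N : ℝ) := by exact_mod_cast hN0
  rw [key_div s₁ _ e1, key_div (s₂ + s₃) _ e23, key_div s₂ _ e2, key_div (s₃ + s₁) _ e31,
    key_div s₃ _ e3, key_div (s₁ + s₂) _ e12]
  rw [ge_iff_le]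
  simp only [← add_div]
  rw [le_div_iff₀ hNR]
  have hkey2 : ((2 * N : ℕ) : ℝ) ≤
      ((m s₁ * ((n - s₁).choose s₂ * (n - s₁ - s₂).choose s₃)
      + m (s₂ + s₃) * ((n - (s₂ + s₃)).choose s₁ * (s₂ + s₃).choose s₂)
      + m s₂ * ((n - s₂).choose s₁ * (n - s₁ - s₂).choose s₃)
      + m (s₁ + s₃) * ((s₁ + s₃).choose s₁ * (n - s₁ - s₃).choose s₂)
      + m s₃ * ((n - s₃).choose s₁ * (n - s₁ - s₃).choose s₂)
      + m (s₁ + s₂) * ((s₁ + s₂).choose s₁ * (n - s₁ - s₂).choose s₃) : ℕ) : ℝ) :=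
    Nat.cast_le.mpr hkey
  push_cast at hkey2 ⊢
  rw [Nat.add_comm s₃ s₁]
  linarith
end

section
/- For n = 3m+1 with m ≥ 1 and any integer t with 2 ≤ t ≤ m−1, one has C(n, m+t) > C(n, t−1) + C(n, m−t). -/
lemma mono_choose (n : ℕ) : ∀ a b : ℕ, a ≤ b → b ≤ n / 2 → n.choose a ≤ n.choose b := by
  intro a b hab hb
  induction b with
  | zero => simp [Nat.le_zero.mp hab]
  | succ k ih =>
    rcases Nat.lt_or_ge a (k+1) with h | h
    · exact le_trans (ih (Nat.lt_succ_iff.mp h) (le_trans (Nat.le_succ _) hb))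
        (Nat.choose_le_succ_of_lt_half_left (Nat.lt_of_succ_le hb))
    · have : a = k + 1 := le_antisymm hab h
      simp [this]

theorem stmt_12 (m t : ℕ) (hm : 1 ≤ m) (ht : 2 ≤ t) (htm : t ≤ m - 1) :
    (3 * m + 1).choose (m + t) >
      (3 * m + 1).choose (t - 1) + (3 * m + 1).choose (m - t) := by
  set n := 3 * m + 1 with hn
  have hm3 : 3 ≤ m := by omega
  have hhalf : m - 1 ≤ n / 2 := by omega
  -- both small terms ≤ choose n (m-1)
  have h1 : n.choose (t - 1) ≤ n.choose (m - 1) := mono_choose n _ _ (by omega) hhalf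
  have h2 : n.choose (m - t) ≤ n.choose (m - 1) := mono_choose n _ _ (by omega) hhalf
  -- key: 2 * choose n (m-1) < choose n (m+1)
  have e1 : n.choose m * m = n.choose (m - 1) * (2 * m + 2) := by
    have := Nat.choose_succ_right_eq n (m - 1)
    have hm1 : m - 1 + 1 = m := by omega
    rw [hm1] at this
    rw [this]
    congr 1
    omega
  have e2 : n.choose (m + 1) * (m + 1) = n.choose m * (2 * m + 1) := by
    have := Nat.choose_succ_right_eq n m
    rw [this]
    congr 1
    omega
  have hpos : 0 < n.choose (m - 1) := Nat.choose_pos (by omega)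
  have key : 2 * n.choose (m - 1) < n.choose (m + 1) := by
    by_contra h
    push_neg at h
    have h3 : n.choose (m + 1) * (m + 1) * m ≤ 2 * n.choose (m - 1) * (m + 1) * m :=
      Nat.mul_le_mul_right _ (Nat.mul_le_mul_right _ h)
    rw [e2] at h3
    nlinarith [e1, hpos]
  -- choose n (m+1) ≤ choose n (m+t)
  have h4 : n.choose (m + 1) ≤ n.choose (m + t) := by
    rcases le_or_gt (m + t) (n / 2) with h | h
    · exact mono_choose n _ _ (by omega) h
    · have hsym : n.choose (m + t) = n.choose (2 * m + 1 - t) := by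
        have : n - (m + t) = 2 * m + 1 - t := by omega
        rw [← this, Nat.choose_symm (by omega)]
      rw [hsym]
      exact mono_choose n _ _ (by omega) (by omega)
  omega
end

section
/- Let G₁, G₂ ⊆ C([n], t) be cross-intersecting families (every set in G₁ intersects every set in G₂) with |G₁| ≥ |G₂|, let c ≥ 1 be a real number, and suppose n ≥ 2t. Then |G₁| + c·|G₂| ≤ max{ C(n,t), (c+1)·C(n−1, t−1) }. -/
attribute [-instance] instDecidableEqFin
open Finset Colex FinsetFamily
open scoped symmDiff

namespace Stmt18

variable {α : Type*} [DecidableEq α]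


/-- relative local LYM -/
lemma local_lym (g : Finset α) (r : ℕ) (hr : 1 ≤ r) (𝒜 : Finset (Finset α))
    (h𝒜 : ∀ A ∈ 𝒜, A ⊆ g ∧ #A = r) :
    (#𝒜 * r) ≤ #(∂ 𝒜) * (#g - r + 1) := by
  classical
  rcases 𝒜.eq_empty_or_nonempty with rfl | ⟨A₀, hA₀⟩
  · simp
  have hrg : r ≤ #g := (h𝒜 A₀ hA₀).2 ▸ card_le_card (h𝒜 A₀ hA₀).1
  refine card_mul_le_card_mul' (· ⊆ ·) (fun A hA => ?_) (fun B hB => ?_)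
  · rw [← (h𝒜 A hA).2, ← card_image_of_injOn A.erase_injOn]
    refine card_le_card ?_
    simp_rw [image_subset_iff, mem_bipartiteBelow]
    exact fun a ha => ⟨erase_mem_shadow hA ha, erase_subset _ _⟩
  · obtain ⟨A, hA, a, haA, hBA⟩ := mem_shadow_iff.1 hB
    have hBcard : #B = r - 1 := by
      subst hBA; rw [card_erase_of_mem haA, (h𝒜 A hA).2]
    have hBg : B ⊆ g := by
      subst hBA; exact (erase_subset _ _).trans (h𝒜 A hA).1
    have hsub : 𝒜.bipartiteAbove (· ⊆ ·) B ⊆ (g \ B).image (fun a => insert a B) := by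
      intro C hC
      rw [mem_bipartiteAbove] at hC
      obtain ⟨hC𝒜, hBC⟩ := hC
      have hcd : #(C \ B) = 1 := by
        rw [card_sdiff_of_subset hBC, (h𝒜 C hC𝒜).2, hBcard]; omega
      obtain ⟨x, hx⟩ := card_eq_one.1 hcd
      have hxB : x ∈ C \ B := hx ▸ mem_singleton_self x
      rw [mem_sdiff] at hxB
      refine mem_image.2 ⟨x, mem_sdiff.2 ⟨(h𝒜 C hC𝒜).1 hxB.1, hxB.2⟩, ?_⟩
      refine eq_of_subset_of_card_le (insert_subset hxB.1 hBC) ?_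
      rw [card_insert_of_notMem hxB.2, (h𝒜 C hC𝒜).2, hBcard]; omega
    calc #(𝒜.bipartiteAbove (· ⊆ ·) B) ≤ #((g \ B).image (fun a => insert a B)) :=
          card_le_card hsub
      _ ≤ #(g \ B) := card_image_le
      _ ≤ #g - r + 1 := by rw [card_sdiff_of_subset hBg, hBcard]; omega

lemma shadow_subsets {r : ℕ} (𝒜 : Finset (Finset α)) (g : Finset α)
    (h𝒜 : ∀ A ∈ 𝒜, A ⊆ g ∧ #A = r + 1) :
    ∀ B ∈ ∂ 𝒜, B ⊆ g ∧ #B = r := by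
  intro B hB
  obtain ⟨A, hA, a, haA, hBA⟩ := mem_shadow_iff.1 hB
  subst hBA
  refine ⟨(erase_subset _ _).trans (h𝒜 A hA).1, ?_⟩
  rw [card_erase_of_mem haA, (h𝒜 A hA).2]; omega

lemma iter_lym (j : ℕ) (g : Finset α) (r : ℕ) (hr : 1 ≤ r) (𝒜 : Finset (Finset α))
    (h𝒜 : ∀ A ∈ 𝒜, A ⊆ g ∧ #A = r + j) :
    (#𝒜 * ∏ l ∈ range j, (r + l + 1)) ≤ #(∂^[j] 𝒜) * ∏ l ∈ range j, (#g - (r + l + 1) + 1) := by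
  induction j generalizing 𝒜 with
  | zero => simp
  | succ j ih =>
    have h𝒜' : ∀ A ∈ 𝒜, A ⊆ g ∧ #A = (r + j) + 1 := by
      intro A hA; exact ⟨(h𝒜 A hA).1, by rw [(h𝒜 A hA).2]; omega⟩
    have h1 : #𝒜 * (r + j + 1) ≤ #(∂ 𝒜) * (#g - (r + j + 1) + 1) :=
      local_lym g (r + j + 1) (by omega) 𝒜 (fun A hA => ⟨(h𝒜 A hA).1, by rw [(h𝒜 A hA).2]; omega⟩)
    have h2 := ih (∂ 𝒜) (shadow_subsets 𝒜 g h𝒜')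
    rw [Function.iterate_succ_apply]
    calc #𝒜 * ∏ l ∈ range (j+1), (r + l + 1)
        = (#𝒜 * (r + j + 1)) * ∏ l ∈ range j, (r + l + 1) := by
          rw [prod_range_succ]; ring
      _ ≤ (#(∂ 𝒜) * (#g - (r + j + 1) + 1)) * ∏ l ∈ range j, (r + l + 1) :=
          Nat.mul_le_mul_right _ h1
      _ = (#(∂ 𝒜) * ∏ l ∈ range j, (r + l + 1)) * (#g - (r + j + 1) + 1) := by ring
      _ ≤ (#(∂^[j] (∂ 𝒜)) * ∏ l ∈ range j, (#g - (r + l + 1) + 1)) * (#g - (r + j + 1) + 1) :=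
          Nat.mul_le_mul_right _ h2
      _ = #(∂^[j] (∂ 𝒜)) * ∏ l ∈ range (j+1), (#g - (r + l + 1) + 1) := by
          rw [prod_range_succ]; ring

lemma iter_lym_ratio (j : ℕ) (g : Finset α) (r : ℕ) (hr : 1 ≤ r) (hg : #g + 1 = 2 * r + j)
    (𝒜 : Finset (Finset α)) (h𝒜 : ∀ A ∈ 𝒜, A ⊆ g ∧ #A = r + j) :
    (r + j) * #𝒜 ≤ r * #(∂^[j] 𝒜) := by
  have key := iter_lym j g r hr 𝒜 h𝒜
  have hP : ∏ l ∈ range j, (#g - (r + l + 1) + 1) = ∏ l ∈ range j, (r + (j - 1 - l)) := by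
    refine prod_congr rfl fun l hl => ?_
    rw [mem_range] at hl; omega
  have hrefl : ∏ l ∈ range j, (r + (j - 1 - l)) = ∏ l ∈ range j, (r + l) := by
    rw [← prod_range_reflect]
    refine prod_congr rfl fun l hl => ?_
    rw [mem_range] at hl
    congr 1; omega
  rw [hP, hrefl] at key
  have hU : r * ∏ l ∈ range j, (r + l + 1) = (r + j) * ∏ l ∈ range j, (r + l) := by
    have e1 : ∏ l ∈ range (j+1), (r + l) = (∏ l ∈ range j, (r + l + 1)) * r := by
      rw [prod_range_succ']
      simp [Nat.add_assoc, Nat.add_comm 1]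
    have e2 : ∏ l ∈ range (j+1), (r + l) = (∏ l ∈ range j, (r + l)) * (r + j) := by
      rw [prod_range_succ]
    calc r * ∏ l ∈ range j, (r + l + 1) = (∏ l ∈ range j, (r + l + 1)) * r := by ring
      _ = (∏ l ∈ range j, (r + l)) * (r + j) := by rw [← e1, e2]
      _ = (r + j) * ∏ l ∈ range j, (r + l) := by ring
  have hUpos : 0 < ∏ l ∈ range j, (r + l + 1) := prod_pos fun l _ => by omega
  refine Nat.le_of_mul_le_mul_right ?_ hUpos
  calc (r + j) * #𝒜 * ∏ l ∈ range j, (r + l + 1)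
      = (#𝒜 * ∏ l ∈ range j, (r + l + 1)) * (r + j) := by ring
    _ ≤ (#(∂^[j] 𝒜) * ∏ l ∈ range j, (r + l)) * (r + j) := Nat.mul_le_mul_right _ key
    _ = #(∂^[j] 𝒜) * ((r + j) * ∏ l ∈ range j, (r + l)) := by ring
    _ = #(∂^[j] 𝒜) * (r * ∏ l ∈ range j, (r + l + 1)) := by rw [← hU]
    _ = r * #(∂^[j] 𝒜) * ∏ l ∈ range j, (r + l + 1) := by ring



lemma exists_initSeg (n m b : ℕ) (hb : b ≤ n.choose m) :
    ∃ 𝒞 : Finset (Finset (Fin n)), IsInitSeg 𝒞 m ∧ #𝒞 = b := by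
  classical
  set L : Finset (Colex (Finset (Fin n))) := ((univ : Finset (Fin n)).powersetCard m).image toColex
    with hLdef
  have hLcard : #L = n.choose m := by
    rw [hLdef, card_image_of_injective _ (fun x y h => toColex_inj.1 h), card_powersetCard,
      card_univ, Fintype.card_fin]
  have hb' : b ≤ #L := hLcard ▸ hb
  set e := L.orderIsoOfFin (rfl : #L = #L) with hedef
  set f : Fin b → Finset (Fin n) := fun i => ofColex (e (Fin.castLE hb' i) : Colex (Finset (Fin n)))
    with hfdef
  have hfinj : Function.Injective f := by
    intro i j hij
    have h2 : (e (Fin.castLE hb' i) : Colex (Finset (Fin n))) = (e (Fin.castLE hb' j) : Colex (Finset (Fin n))) := by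
      have := congrArg toColex hij
      simpa [hfdef] using this
    have h3 : e (Fin.castLE hb' i) = e (Fin.castLE hb' j) := Subtype.ext h2
    have h4 := e.injective h3
    exact Fin.castLE_injective hb' h4
  refine ⟨(univ : Finset (Fin b)).image f, ⟨?_, ?_⟩, ?_⟩
  · -- sized
    intro A hA
    simp only [coe_image, Set.mem_image, mem_coe, mem_univ] at hA
    obtain ⟨i, -, rfl⟩ := hA
    have hmem : (e (Fin.castLE hb' i) : Colex (Finset (Fin n))) ∈ L := (e (Fin.castLE hb' i)).2
    have hmem2 : (e (Fin.castLE hb' i) : Colex (Finset (Fin n))) ∈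
        ((univ : Finset (Fin n)).powersetCard m).image toColex := hmem
    rw [mem_image] at hmem2
    obtain ⟨S, hS, hSe⟩ := hmem2
    have hfi : f i = S := toColex_inj.1 (by rw [hSe]; rfl)
    rw [hfi]
    exact (mem_powersetCard.1 hS).2
  · -- downward closed
    intro s t hs ht
    obtain ⟨hlt, htcard⟩ := ht
    rw [mem_image] at hs
    obtain ⟨i, -, rfl⟩ := hs
    have htL : toColex t ∈ L := by
      rw [hLdef, mem_image]
      exact ⟨t, mem_powersetCard.2 ⟨subset_univ _, htcard⟩, rfl⟩
    set y : {x // x ∈ L} := ⟨toColex t, htL⟩ with hydef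
    set j := e.symm y with hjdef
    have hts : toColex (f i) = (e (Fin.castLE hb' i) : Colex (Finset (Fin n))) := by
      rw [hfdef]; rfl
    have hlt2 : (e j : Colex (Finset (Fin n))) < (e (Fin.castLE hb' i) : Colex (Finset (Fin n))) := by
      rw [hjdef, e.apply_symm_apply, hydef]
      rw [hts] at hlt
      exact hlt
    have hji : j < Fin.castLE hb' i := by
      rw [← e.lt_iff_lt]
      exact hlt2
    have hjb : (j : ℕ) < b := lt_of_lt_of_le hji (by simpa using i.isLt)
    rw [mem_image]
    refine ⟨⟨(j : ℕ), hjb⟩, mem_univ _, ?_⟩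
    have hcast : Fin.castLE hb' ⟨(j : ℕ), hjb⟩ = j := by
      apply Fin.ext; simp
    have : toColex (f ⟨(j : ℕ), hjb⟩) = toColex t := by
      rw [hfdef]
      simp only [toColex_ofColex, hcast]
      rw [hjdef, e.apply_symm_apply, hydef]
    exact toColex_inj.1 this
  · rw [card_image_of_injective _ hfinj, card_univ, Fintype.card_fin]

lemma initSeg_avoid {n m : ℕ} (z : Fin n) (hz : ∀ a : Fin n, a ≤ z)
    (𝒞 : Finset (Finset (Fin n))) (h : IsInitSeg 𝒞 m)
    (hcard : #𝒞 ≤ (n - 1).choose m) : ∀ A ∈ 𝒞, A ⊆ univ.erase z := by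
  classical
  intro A hA
  by_contra hsub
  have hzA : z ∈ A := by
    by_contra hzA
    exact hsub fun x hx => mem_erase.2 ⟨fun h' => hzA (h' ▸ hx), mem_univ x⟩
  set W : Finset (Finset (Fin n)) := (univ.erase z).powersetCard m with hWdef
  have hWcard : #W = (n - 1).choose m := by
    rw [hWdef, card_powersetCard, card_erase_of_mem (mem_univ z), card_univ, Fintype.card_fin]
  have hWsub : W ⊆ 𝒞 := by
    intro B hB
    rw [hWdef, mem_powersetCard] at hB
    obtain ⟨hBsub, hBcard⟩ := hB
    have hzB : z ∉ B := fun hzB => (mem_erase.1 (hBsub hzB)).1 rfl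
    have hlt : toColex B < toColex A := by
      rw [toColex_lt_toColex_iff_exists_forall_lt]
      refine ⟨z, hzA, hzB, fun b hb hbA => ?_⟩
      exact lt_of_le_of_ne (hz b) (fun h' => hbA (h' ▸ hzA))
    exact h.2 hA ⟨hlt, hBcard⟩
  have hAW : A ∉ W := by
    intro hAW
    rw [hWdef, mem_powersetCard] at hAW
    exact (mem_erase.1 (hAW.1 hzA)).1 rfl
  have : #W + 1 ≤ #𝒞 := by
    have h1 : insert A W ⊆ 𝒞 := insert_subset hA hWsub
    have := card_le_card h1
    rwa [card_insert_of_notMem hAW] at this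
  omega


lemma choose_id1 {n t m : ℕ} (ht : 1 ≤ t) (hn : n = t + m) :
    (n - 1).choose m = (n - 1).choose (t - 1) := by
  have h1 : m = (n - 1) - (t - 1) := by omega
  rw [h1]
  exact Nat.choose_symm (by omega)

lemma choose_id2 {n t m : ℕ} (ht : 1 ≤ t) (hn : n = t + m) :
    t * (n - 1).choose t = m * (n - 1).choose (t - 1) := by
  have h := Nat.choose_succ_right_eq (n - 1) (t - 1)
  have h2 : t - 1 + 1 = t := by omega
  rw [h2] at h
  have h3 : n - 1 - (t - 1) = m := by omega
  calc t * (n - 1).choose t = (n - 1).choose t * t := Nat.mul_comm _ _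
    _ = (n - 1).choose (t - 1) * (n - 1 - (t - 1)) := h
    _ = m * (n - 1).choose (t - 1) := by rw [h3]; exact Nat.mul_comm _ _

lemma shadow_bound {n t m : ℕ} (ht : 1 ≤ t) (htm : t ≤ m) (hn : n = t + m)
    (ℱ : Finset (Finset (Fin n))) (hℱ : ∀ A ∈ ℱ, #A = m) :
    min (m * #ℱ) (t * (n - 1).choose t) ≤ t * #(∂^[m - t] ℱ) := by
  have hFsub : ℱ ⊆ (univ : Finset (Fin n)).powersetCard m := fun A hA =>
    mem_powersetCard.2 ⟨subset_univ _, hℱ A hA⟩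
  have hFcard : #ℱ ≤ n.choose m := by
    have := card_le_card hFsub
    rwa [card_powersetCard, card_univ, Fintype.card_fin] at this
  set b' := min #ℱ ((n - 1).choose m) with hb'def
  have hb'n : b' ≤ n.choose m := le_trans (min_le_left _ _) hFcard
  obtain ⟨𝒞, h𝒞init, h𝒞card⟩ := exists_initSeg n m b' hb'n
  have hsized : (ℱ : Set (Finset (Fin n))).Sized m := fun A hA => hℱ A hA
  have hkk : #(∂^[m - t] 𝒞) ≤ #(∂^[m - t] ℱ) :=
    iterated_kk hsized (by rw [h𝒞card]; exact min_le_left _ _) h𝒞init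
  set z : Fin n := ⟨n - 1, by omega⟩ with hzdef
  have hz : ∀ a : Fin n, a ≤ z := by
    intro a
    have := a.isLt
    rw [Fin.le_def]
    simp [hzdef]; omega
  have h𝒞g : ∀ A ∈ 𝒞, A ⊆ univ.erase z :=
    initSeg_avoid z hz 𝒞 h𝒞init (h𝒞card ▸ min_le_right _ _)
  have hgcard : #((univ : Finset (Fin n)).erase z) + 1 = 2 * t + (m - t) := by
    rw [card_erase_of_mem (mem_univ z), card_univ, Fintype.card_fin]; omega
  have hratio := iter_lym_ratio (m - t) (univ.erase z) t ht hgcard 𝒞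
    (fun A hA => ⟨h𝒞g A hA, by rw [h𝒞init.1 hA]; omega⟩)
  have hmb : m * b' ≤ t * #(∂^[m - t] 𝒞) := by
    have : t + (m - t) = m := by omega
    rw [this, h𝒞card] at hratio
    exact hratio
  have hfin : m * b' ≤ t * #(∂^[m - t] ℱ) :=
    le_trans hmb (Nat.mul_le_mul_left _ hkk)
  rcases le_total #ℱ ((n - 1).choose m) with hc | hc
  · have hb1 : b' = #ℱ := min_eq_left hc
    calc min (m * #ℱ) (t * (n - 1).choose t) ≤ m * #ℱ := min_le_left _ _
      _ = m * b' := by rw [hb1]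
      _ ≤ _ := hfin
  · have hb2 : b' = (n - 1).choose m := min_eq_right hc
    calc min (m * #ℱ) (t * (n - 1).choose t) ≤ t * (n - 1).choose t := min_le_right _ _
      _ = m * (n - 1).choose (t - 1) := choose_id2 ht hn
      _ = m * b' := by rw [hb2, choose_id1 ht hn]
      _ ≤ _ := hfin


lemma main_count {n t m : ℕ} (ht : 1 ≤ t) (htm : t ≤ m) (hn : n = t + m)
    (G₁ G₂ : Finset (Finset (Fin n)))
    (h₁ : ∀ A ∈ G₁, #A = t) (h₂ : ∀ B ∈ G₂, #B = t)
    (hcross : ∀ A ∈ G₁, ∀ B ∈ G₂, (A ∩ B).Nonempty)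
    (hcard : #G₂ ≤ #G₁) :
    t * #G₁ + m * #G₂ ≤ t * n.choose t := by
  have hG1le : #G₁ ≤ n.choose t := by
    have hsub : G₁ ⊆ (univ : Finset (Fin n)).powersetCard t := fun A hA =>
      mem_powersetCard.2 ⟨subset_univ _, h₁ A hA⟩
    have := card_le_card hsub
    rwa [card_powersetCard, card_univ, Fintype.card_fin] at this
  set ℱ := G₂.image (·ᶜ) with hℱdef
  have hℱcard : #ℱ = #G₂ := card_image_of_injective _ compl_injective
  have hℱsized : ∀ A ∈ ℱ, #A = m := by
    intro A hA
    obtain ⟨B, hB, rfl⟩ := mem_image.1 hA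
    rw [card_compl, h₂ B hB, Fintype.card_fin]
    omega
  have hsb := shadow_bound ht htm hn ℱ hℱsized
  set D := ∂^[m - t] ℱ with hDdef
  have hDmem : ∀ K ∈ D, #K = t ∧ ∃ B ∈ G₂, K ⊆ Bᶜ := by
    intro K hK
    obtain ⟨F, hF, hKF, hcd⟩ := mem_shadow_iterate_iff_exists_sdiff.1 hK
    have hFm := hℱsized F hF
    have hKcard : #K = t := by
      have h5 := card_sdiff_of_subset hKF
      have h6 := card_le_card hKF
      omega
    obtain ⟨B, hB, rfl⟩ := mem_image.1 hF
    exact ⟨hKcard, B, hB, hKF⟩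
  have hdisj : Disjoint G₁ D := by
    rw [disjoint_left]
    intro A hA hAD
    obtain ⟨-, B, hB, hAB⟩ := hDmem A hAD
    obtain ⟨x, hx⟩ := hcross A hA B hB
    rw [mem_inter] at hx
    exact (mem_compl.1 (hAB hx.1)) hx.2
  have hcount : #G₁ + #D ≤ n.choose t := by
    have hsub : G₁ ∪ D ⊆ (univ : Finset (Fin n)).powersetCard t := by
      intro K hK
      rcases mem_union.1 hK with h | h
      · exact mem_powersetCard.2 ⟨subset_univ _, h₁ K h⟩
      · exact mem_powersetCard.2 ⟨subset_univ _, (hDmem K h).1⟩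
    have h7 := card_le_card hsub
    rwa [card_union_of_disjoint hdisj, card_powersetCard, card_univ, Fintype.card_fin] at h7
  rw [hℱcard] at hsb
  rcases min_le_iff.1 hsb with hcase | hcase
  · calc t * #G₁ + m * #G₂ ≤ t * #G₁ + t * #D := by omega
      _ = t * (#G₁ + #D) := by ring
      _ ≤ t * n.choose t := Nat.mul_le_mul_left _ hcount
  · have hDge : (n - 1).choose t ≤ #D := Nat.le_of_mul_le_mul_left hcase (by omega)
    have hpascal : n.choose t = (n - 1).choose (t - 1) + (n - 1).choose t := by
      have e1 : n - 1 + 1 = n := by omega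
      have e2 : t - 1 + 1 = t := by omega
      calc n.choose t = ((n - 1) + 1).choose ((t - 1) + 1) := by rw [e1, e2]
        _ = (n - 1).choose (t - 1) + (n - 1).choose ((t - 1) + 1) := Nat.choose_succ_succ _ _
        _ = (n - 1).choose (t - 1) + (n - 1).choose t := by rw [e2]
    have hQ : #G₁ ≤ (n - 1).choose (t - 1) := by omega
    have hQ2 : #G₂ ≤ (n - 1).choose (t - 1) := le_trans hcard hQ
    have hid : n * (n - 1).choose (t - 1) = t * n.choose t := by
      have h8 := Nat.add_one_mul_choose_eq (n - 1) (t - 1)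
      have e1 : n - 1 + 1 = n := by omega
      have e2 : t - 1 + 1 = t := by omega
      rw [e1, e2] at h8
      calc n * (n - 1).choose (t - 1) = n.choose t * t := h8
        _ = t * n.choose t := Nat.mul_comm _ _
    calc t * #G₁ + m * #G₂
        ≤ t * (n - 1).choose (t - 1) + m * (n - 1).choose (t - 1) :=
          Nat.add_le_add (Nat.mul_le_mul_left _ hQ) (Nat.mul_le_mul_left _ hQ2)
      _ = n * (n - 1).choose (t - 1) := by rw [hn]; ring
      _ = t * n.choose t := hid


end Stmt18

theorem stmt_18 (n t : ℕ) (hnt : 2 * t ≤ n)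
    (G₁ G₂ : Finset (Finset ℕ))
    (hG₁ : G₁ ⊆ (Finset.range n).powersetCard t)
    (hG₂ : G₂ ⊆ (Finset.range n).powersetCard t)
    (hcross : ∀ A ∈ G₁, ∀ B ∈ G₂, (A ∩ B).Nonempty)
    (hcard : G₂.card ≤ G₁.card)
    (c : ℝ) (hc : 1 ≤ c) :
    (G₁.card : ℝ) + c * (G₂.card : ℝ) ≤
      max ((n.choose t : ℝ)) ((c + 1) * ((n - 1).choose (t - 1) : ℝ)) := by
  classical
  rcases Nat.eq_zero_or_pos t with rfl | ht
  · -- t = 0 case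
    have hG₂empty : G₂ = ∅ := by
      by_contra h
      obtain ⟨B, hB⟩ := nonempty_iff_ne_empty.2 h
      have hG₁ne : G₁.Nonempty := by
        rw [← card_pos]
        have : 0 < #G₂ := card_pos.2 ⟨B, hB⟩
        omega
      obtain ⟨A, hA⟩ := hG₁ne
      have hAe : A = ∅ := card_eq_zero.1 (mem_powersetCard.1 (hG₁ hA)).2
      have hBe : B = ∅ := card_eq_zero.1 (mem_powersetCard.1 (hG₂ hB)).2
      obtain ⟨x, hx⟩ := hcross A hA B hB
      rw [hAe, hBe] at hx
      simp at hx
    have hG₁card : #G₁ ≤ 1 := by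
      have := card_le_card hG₁
      simpa using this
    rw [hG₂empty]
    refine le_trans ?_ (le_max_left _ _)
    simp only [card_empty, Nat.cast_zero, mul_zero, add_zero, Nat.choose_zero_right,
      Nat.cast_one]
    exact_mod_cast hG₁card
  -- t ≥ 1
  set m := n - t with hmdef
  have htm : t ≤ m := by omega
  have hn' : n = t + m := by omega
  -- transfer to Fin n
  set Φ : Finset (Fin n) → Finset ℕ := fun S => S.map Fin.valEmbedding with hΦdef
  have hΦmem : ∀ (S : Finset (Fin n)) (x : ℕ), x ∈ Φ S ↔ ∃ a ∈ S, (a : ℕ) = x := by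
    intro S x; simp [hΦdef]
  set G₁' : Finset (Finset (Fin n)) :=
    ((univ : Finset (Fin n)).powersetCard t).filter (fun S => Φ S ∈ G₁) with hG₁'def
  set G₂' : Finset (Finset (Fin n)) :=
    ((univ : Finset (Fin n)).powersetCard t).filter (fun S => Φ S ∈ G₂) with hG₂'def
  have htransfer : ∀ (G : Finset (Finset ℕ)), G ⊆ (Finset.range n).powersetCard t →
      #(((univ : Finset (Fin n)).powersetCard t).filter (fun S => Φ S ∈ G)) = #G := by
    intro G hG
    refine card_bij' (fun S _ => Φ S)
      (fun A hA => A.attachFin (fun x hx => mem_range.1 ((mem_powersetCard.1 (hG hA)).1 hx)))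
      ?_ ?_ ?_ ?_
    · intro S hS
      exact (mem_filter.1 hS).2
    · intro A hA
      rw [mem_filter]
      constructor
      · rw [mem_powersetCard]
        refine ⟨subset_univ _, ?_⟩
        rw [card_attachFin]
        exact (mem_powersetCard.1 (hG hA)).2
      · have : ∀ (hpf : ∀ x ∈ A, x < n), Φ (A.attachFin hpf) = A := by
          intro hpf
          ext x
          rw [hΦmem]
          constructor
          · rintro ⟨a, ha, rfl⟩
            exact (mem_attachFin _).1 ha
          · intro hx
            exact ⟨⟨x, mem_range.1 ((mem_powersetCard.1 (hG hA)).1 hx)⟩,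
              (mem_attachFin _).2 hx, rfl⟩
        rw [this _]
        exact hA
    · intro S hS
      ext a
      rw [mem_attachFin, hΦmem]
      constructor
      · rintro ⟨b, hb, hba⟩
        rwa [← Fin.val_injective hba]
      · intro ha
        exact ⟨a, ha, rfl⟩
    · intro A hA
      ext x
      rw [hΦmem]
      constructor
      · rintro ⟨a, ha, rfl⟩
        exact (mem_attachFin _).1 ha
      · intro hx
        exact ⟨⟨x, mem_range.1 ((mem_powersetCard.1 (hG hA)).1 hx)⟩,
          (mem_attachFin _).2 hx, rfl⟩
  have hc1 : #G₁' = #G₁ := htransfer G₁ hG₁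
  have hc2 : #G₂' = #G₂ := htransfer G₂ hG₂
  have hcross' : ∀ A ∈ G₁', ∀ B ∈ G₂', (A ∩ B).Nonempty := by
    intro A hA B hB
    obtain ⟨x, hx⟩ := hcross (Φ A) ((mem_filter.1 hA).2) (Φ B) ((mem_filter.1 hB).2)
    rw [mem_inter, hΦmem, hΦmem] at hx
    obtain ⟨⟨a, ha, rfl⟩, ⟨b, hb, hba⟩⟩ := hx
    have : b = a := Fin.val_injective hba
    subst this
    exact ⟨b, mem_inter.2 ⟨ha, hb⟩⟩
  have key := Stmt18.main_count ht htm hn' G₁' G₂'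
    (fun A hA => (mem_powersetCard.1 (mem_filter.1 hA).1).2)
    (fun B hB => (mem_powersetCard.1 (mem_filter.1 hB).1).2)
    hcross' (by rw [hc1, hc2]; exact hcard)
  rw [hc1, hc2] at key
  -- derive b ≤ Q
  have hid : t * n.choose t = n * (n - 1).choose (t - 1) := by
    have h8 := Nat.add_one_mul_choose_eq (n - 1) (t - 1)
    have e1 : n - 1 + 1 = n := by omega
    have e2 : t - 1 + 1 = t := by omega
    rw [e1, e2] at h8
    calc t * n.choose t = n.choose t * t := Nat.mul_comm _ _
      _ = n * (n - 1).choose (t - 1) := h8.symm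
  have hbQ : #G₂ ≤ (n - 1).choose (t - 1) := by
    have h9 : n * #G₂ ≤ n * (n - 1).choose (t - 1) := by
      calc n * #G₂ = t * #G₂ + m * #G₂ := by rw [hn']; ring
        _ ≤ t * #G₁ + m * #G₂ := by
            have := Nat.mul_le_mul_left t hcard
            omega
        _ ≤ t * n.choose t := key
        _ = n * (n - 1).choose (t - 1) := hid
    exact Nat.le_of_mul_le_mul_left h9 (by omega)
  -- real arithmetic
  have hT : (0 : ℝ) < t := by exact_mod_cast ht
  have hkeyR : (t : ℝ) * #G₁ + (m : ℝ) * #G₂ ≤ (t : ℝ) * (n.choose t : ℝ) := by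
    exact_mod_cast key
  have hidR : (t : ℝ) * (n.choose t : ℝ) = (n : ℝ) * ((n - 1).choose (t - 1) : ℝ) := by
    exact_mod_cast hid
  have hbQR : ((#G₂ : ℕ) : ℝ) ≤ ((n - 1).choose (t - 1) : ℝ) := by exact_mod_cast hbQ
  have hnR : (n : ℝ) = (t : ℝ) + (m : ℝ) := by
    rw [hn']; push_cast; ring
  have hb0 : (0 : ℝ) ≤ (#G₂ : ℝ) := Nat.cast_nonneg _
  rcases le_total (c * t) (m : ℝ) with hcm | hcm
  · refine le_trans ?_ (le_max_left _ _)
    rw [← mul_le_mul_iff_right₀ hT]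
    calc (t : ℝ) * ((#G₁ : ℝ) + c * (#G₂ : ℝ))
        = (t : ℝ) * (#G₁ : ℝ) + (c * t) * (#G₂ : ℝ) := by ring
      _ ≤ (t : ℝ) * (#G₁ : ℝ) + (m : ℝ) * (#G₂ : ℝ) := by nlinarith
      _ ≤ (t : ℝ) * (n.choose t : ℝ) := hkeyR
  · refine le_trans ?_ (le_max_right _ _)
    rw [← mul_le_mul_iff_right₀ hT]
    have h10 : (c * t - m) * (#G₂ : ℝ) ≤ (c * t - m) * ((n - 1).choose (t - 1) : ℝ) := by
      apply mul_le_mul_of_nonneg_left hbQR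
      linarith
    calc (t : ℝ) * ((#G₁ : ℝ) + c * (#G₂ : ℝ))
        = ((t : ℝ) * (#G₁ : ℝ) + (m : ℝ) * (#G₂ : ℝ)) + (c * t - m) * (#G₂ : ℝ) := by ring
      _ ≤ (t : ℝ) * (n.choose t : ℝ) + (c * t - m) * ((n - 1).choose (t - 1) : ℝ) := by
          linarith
      _ = (t : ℝ) * ((c + 1) * ((n - 1).choose (t - 1) : ℝ)) := by
          rw [hidR, hnR]; ring
end
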